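/- arXiv:2402.17137 — 9 statements merged into one kernel-verified Lean document; each statement's English description precedes it below -/
import Mathlib

section
/- For every finite set X of vertices of the shift graph Sh(2,ℕ) (vertices are 2-element subsets of ℕ, with {x,y} adjacent to {y,z} when x<y<z) and every stochastic weight vector w: X → [0,1] (i.e., the weights sum to 1), there exists an independent set I ⊆ X of Sh(2,ℕ) with ∑_{i∈I} w(i) ≥ 1/4. -/
/-- Vertices of the shift graph `Sh(2,ℕ)`: ordered pairs `(i,j)` with `i < j`. -/
def ShVert : Type := {p : ℕ × ℕ // p.1 < p.2}

/-- Adjacency in the shift graph: `{x,y}` and `{y,z}` with `x < y < z`. -/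
def ShAdj (p q : ShVert) : Prop := p.1.2 = q.1.1 ∨ q.1.2 = p.1.1

/-- Counting: subsets `A ⊆ range n` with `i ∉ A` and `j ∈ A` number `2^(n-2)`. -/
lemma count_lemma (n i j : ℕ) (hij : i ≠ j) (hi : i ∈ Finset.range n) (hj : j ∈ Finset.range n) :
    ((Finset.range n).powerset.filter (fun A => i ∉ A ∧ j ∈ A)).card = 2 ^ (n - 2) := by
  have key : ((Finset.range n).powerset.filter (fun A => i ∉ A ∧ j ∈ A)).card
      = (((Finset.range n).erase i).erase j).powerset.card := by
    apply Finset.card_bij (fun A _ => A.erase j)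
    · intro A hA
      simp only [Finset.mem_filter, Finset.mem_powerset] at hA ⊢
      intro x hx
      simp only [Finset.mem_erase] at hx ⊢
      exact ⟨hx.1, fun hxi => hA.2.1 (hxi ▸ hx.2), hA.1 hx.2⟩
    · intro A hA B hB h
      simp only [Finset.mem_filter, Finset.mem_powerset] at hA hB
      have := congrArg (insert j) h
      rwa [Finset.insert_erase hA.2.2, Finset.insert_erase hB.2.2] at this
    · intro B hB
      simp only [Finset.mem_powerset] at hB
      refine ⟨insert j B, ?_, ?_⟩
      · simp only [Finset.mem_filter, Finset.mem_powerset]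
        refine ⟨?_, ?_, Finset.mem_insert_self _ _⟩
        · intro x hx
          rcases Finset.mem_insert.mp hx with h | h
          · exact h ▸ hj
          · exact Finset.mem_of_mem_erase (Finset.mem_of_mem_erase (hB h))
        · intro hmem
          rcases Finset.mem_insert.mp hmem with h | h
          · exact hij h
          · exact (Finset.mem_erase.mp (Finset.mem_of_mem_erase (hB h))).1 rfl
      · have : j ∉ B := fun h => (Finset.mem_erase.mp (hB h)).1 rfl
        rw [Finset.erase_insert this]
  rw [key, Finset.card_powerset, Finset.card_erase_of_mem, Finset.card_erase_of_mem hi,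
    Finset.card_range]
  · congr 1
  · exact Finset.mem_erase.mpr ⟨fun h => hij h.symm, hj⟩

/-- For every finite set of vertices of `Sh(2,ℕ)` and every stochastic weight vector on it,
there is an independent set carrying at least `1/4` of the total weight. -/
theorem shift_graph_weighted_independent_set
    (X : Finset ShVert) (w : ShVert → ℝ)
    (hw01 : ∀ x ∈ X, 0 ≤ w x ∧ w x ≤ 1)
    (hw1 : ∑ x ∈ X, w x = 1) :
    ∃ I ⊆ X, (∀ p ∈ I, ∀ q ∈ I, ¬ ShAdj p q) ∧ (1/4 : ℝ) ≤ ∑ i ∈ I, w i := by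
  classical
  have hXne : X.Nonempty := by
    by_contra h
    rw [Finset.not_nonempty_iff_eq_empty] at h
    simp [h] at hw1
  set n := X.sup (fun x => x.1.2) + 1 with hn
  have hlt : ∀ x : ShVert, x.1.1 < x.1.2 := fun x => x.2
  have hmem : ∀ x ∈ X, x.1.1 ∈ Finset.range n ∧ x.1.2 ∈ Finset.range n := by
    intro x hx
    have h2 : x.1.2 ≤ X.sup (fun x => x.1.2) := Finset.le_sup (f := fun x : ShVert => x.1.2) hx
    have := hlt x
    constructor <;> simp only [Finset.mem_range, hn] <;> omega
  have hn2 : 2 ≤ n := by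
    obtain ⟨x, hx⟩ := hXne
    have h2 : x.1.2 ≤ X.sup (fun x => x.1.2) := Finset.le_sup (f := fun x : ShVert => x.1.2) hx
    have := hlt x
    omega
  set P := (Finset.range n).powerset with hP
  set f : Finset ℕ → ℝ := fun A => ∑ x ∈ X.filter (fun x => x.1.1 ∉ A ∧ x.1.2 ∈ A), w x with hf
  have hsum : ∑ A ∈ P, f A = 2 ^ (n - 2) := by
    have : ∀ A ∈ P, f A = ∑ x ∈ X, if x.1.1 ∉ A ∧ x.1.2 ∈ A then w x else 0 := by
      intro A _; exact Finset.sum_filter _ _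
    rw [Finset.sum_congr rfl this, Finset.sum_comm]
    have : ∀ x ∈ X, (∑ A ∈ P, if x.1.1 ∉ A ∧ x.1.2 ∈ A then w x else 0)
        = 2 ^ (n - 2) * w x := by
      intro x hx
      rw [← Finset.sum_filter, Finset.sum_const,
        count_lemma n x.1.1 x.1.2 (Nat.ne_of_lt (hlt x)) (hmem x hx).1 (hmem x hx).2]
      simp [nsmul_eq_mul]
    rw [Finset.sum_congr rfl this, ← Finset.mul_sum, hw1, mul_one]
  have hPcard : P.card = 2 ^ n := by rw [hP, Finset.card_powerset, Finset.card_range]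
  have hPne : P.Nonempty := ⟨∅, by simp [hP]⟩
  have havg : ∑ A ∈ P, (1/4 : ℝ) ≤ ∑ A ∈ P, f A := by
    rw [hsum, Finset.sum_const, hPcard, nsmul_eq_mul]
    have h4 : (2:ℝ) ^ n = 2 ^ (n - 2) * 4 := by
      have hnn : n - 2 + 2 = n := by omega
      calc (2:ℝ) ^ n = 2 ^ (n - 2 + 2) := by rw [hnn]
        _ = 2 ^ (n - 2) * 4 := by rw [pow_add]; norm_num
    push_cast
    rw [h4]
    ring_nf
    exact le_refl _

  obtain ⟨A, hA, hAge⟩ := Finset.exists_le_of_sum_le hPne havg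
  refine ⟨X.filter (fun x => x.1.1 ∉ A ∧ x.1.2 ∈ A), Finset.filter_subset _ _, ?_, hAge⟩
  intro p hp q hq hadj
  simp only [Finset.mem_filter] at hp hq
  rcases hadj with h | h
  · exact hq.2.1 (h ▸ hp.2.2)
  · exact hp.2.1 (h ▸ hq.2.2)
end

section
/- Let a, γ > 0 with β = a/√(2(1+γ+γ²)) and y_{\{i,j\}} = β·e_i − βγ·e_j for i<j as above. Then for distinct pairs e, e', we have ‖y_e − y_{e'}‖ = a if and only if e and e' are adjacent in the shift graph Sh(2,ℕ), i.e., max(e) = min(e') or max(e') = min(e). -/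
/-- For distinct pairs `e = {i,j}`, `e' = {i',j'}`, the distance between `y_e` and `y_{e'}`
equals `a` if and only if the two pairs are adjacent in the shift graph `Sh(2,ℕ)`,
i.e. the maximum of one is the minimum of the other. -/
theorem dist_eq_a_iff_shift_adjacent
    {H : Type*} [NormedAddCommGroup H] [InnerProductSpace ℝ H]
    (e : ℕ → H) (he : Orthonormal ℝ e)
    (a γ β : ℝ) (ha : 0 < a) (hγ : 0 < γ)
    (hβ : β = a / Real.sqrt (2 * (1 + γ + γ^2)))
    (y : ℕ → ℕ → H) (hy : ∀ i j : ℕ, i < j → y i j = β • e i - (β * γ) • e j)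
    (i j i' j' : ℕ) (hij : i < j) (hij' : i' < j') (hne : (i, j) ≠ (i', j')) :
    ‖y i j - y i' j'‖ = a ↔ (j = i' ∨ j' = i) := by
  have hkey := orthonormal_iff_ite.mp he
  have hpos : (0:ℝ) < 2 * (1 + γ + γ^2) := by positivity
  have hβpos : 0 < β := by
    rw [hβ]
    exact div_pos ha (Real.sqrt_pos.mpr hpos)
  have hβsq : 0 < β * β := mul_pos hβpos hβpos
  have hβsγ : 0 < β * β * γ := mul_pos hβsq hγ
  have hβ2 : β^2 * (2 * (1 + γ + γ^2)) = a^2 := by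
    rw [hβ, div_pow, Real.sq_sqrt hpos.le]
    field_simp
  rw [hy i j hij, hy i' j' hij']
  set v := (β • e i - (β*γ) • e j) - (β • e i' - (β*γ) • e j') with hv
  have hiff : ‖v‖ = a ↔ ‖v‖^2 = a^2 := by
    constructor
    · intro h; rw [h]
    · intro h; nlinarith [norm_nonneg v]
  rw [hiff]
  have hexpand := (real_inner_self_eq_norm_sq v).symm
  by_cases h1 : j = i'
  · -- adjacent: j = i'
    have hval : ‖v‖^2 = a^2 := by
      rw [hexpand, ← hβ2]
      simp only [hv, inner_sub_left, inner_sub_right, real_inner_smul_left,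
        real_inner_smul_right, hkey]
      simp [h1, show i ≠ j by omega, show j ≠ i by omega, show i' ≠ j' by omega,
        show j' ≠ i' by omega, show i ≠ i' by omega, show i' ≠ i by omega,
        show i ≠ j' by omega, show j' ≠ i by omega]
      ring
    simp [hval, h1]
  · by_cases h2 : j' = i
    · -- adjacent: j' = i
      have hval : ‖v‖^2 = a^2 := by
        rw [hexpand, ← hβ2]
        simp only [hv, inner_sub_left, inner_sub_right, real_inner_smul_left,
          real_inner_smul_right, hkey]
        simp [h2, show i ≠ j by omega, show j ≠ i by omega, show i' ≠ j' by omega,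
          show j' ≠ i' by omega, show i ≠ i' by omega, show i' ≠ i by omega,
          show j ≠ i' by omega, show i' ≠ j by omega, show j ≠ j' by omega,
          show j' ≠ j by omega]
        ring
      simp [hval, h2]
    · simp only [h1, h2, or_self, iff_false]
      intro hval
      rw [hexpand] at hval
      by_cases h3 : i = i'
      · have hjj' : j ≠ j' := fun h => hne (by rw [h3, h])
        simp only [hv, inner_sub_left, inner_sub_right, real_inner_smul_left,
          real_inner_smul_right, hkey] at hval
        simp [h3, hjj', hjj'.symm, show i ≠ j by omega, show j ≠ i by omega,
          show i' ≠ j' by omega, show j' ≠ i' by omega, show i ≠ j' by omega,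
          show j' ≠ i by omega, show j ≠ i' by omega, show i' ≠ j by omega] at hval
        nlinarith [hval, hβsq, hβsγ]
      · by_cases h4 : j = j'
        · have hii' : i ≠ i' := h3
          simp only [hv, inner_sub_left, inner_sub_right, real_inner_smul_left,
            real_inner_smul_right, hkey] at hval
          simp [h4, h3, show i' ≠ i by omega, show i ≠ j by omega, show j ≠ i by omega,
            show i' ≠ j' by omega, show j' ≠ i' by omega, show i ≠ j' by omega,
            show j' ≠ i by omega, show j ≠ i' by omega, show i' ≠ j by omega] at hval
          nlinarith [hval, hβsq, hβsγ]
        · simp only [hv, inner_sub_left, inner_sub_right, real_inner_smul_left,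
            real_inner_smul_right, hkey] at hval
          simp [h1, h2, h3, h4, show i ≠ j' by omega, show j ≠ i' by omega, show i' ≠ i by omega, show i' ≠ j by omega,
            show j' ≠ j by omega, show j' ≠ i by omega, show i ≠ j by omega,
            show j ≠ i by omega, show i' ≠ j' by omega, show j' ≠ i' by omega] at hval
          nlinarith [hval, hβsq, hβsγ]
end

section
/- The configuration Y_A = { β·e_i − βγ·e_j : i < j } ⊆ ℓ² (with β, γ > 0) contains no equilateral triangle with all three side lengths equal to a = β√(2(1+γ+γ²)), provided γ ≠ 1 or more generally provided the four possible squared distances 2β²γ², 2β², 2β²(1+γ+γ²), 2β²(1+γ²) are such that only 2β²(1+γ+γ²) equals a²: there are no three points of Y_A pairwise at distance a. -/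
open RealInnerProductSpace

lemma pair_cond
    {H : Type*} [NormedAddCommGroup H] [InnerProductSpace ℝ H]
    (e : ℕ → H) (he : Orthonormal ℝ e)
    (a γ β : ℝ) (hβ : 0 < β) (hγ : 0 < γ)
    (ha : a^2 = 2 * β^2 * (1 + γ + γ^2))
    (h1 : 2 * β^2 * γ^2 ≠ a^2) (h2 : 2 * β^2 ≠ a^2) (h3 : 2 * β^2 * (1 + γ^2) ≠ a^2)
    (i j k l : ℕ) (hij : i < j) (hkl : k < l)
    (hd : dist (β • e i - (β * γ) • e j) (β • e k - (β * γ) • e l) = a) :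
    i ≠ k ∧ j ≠ l ∧ (i = l ∨ j = k) := by
  have hip : ∀ m n, ⟪e m, e n⟫ = if m = n then (1:ℝ) else 0 := orthonormal_iff_ite.mp he
  have hij' : i ≠ j := hij.ne
  have hkl' : k ≠ l := hkl.ne
  have hsq : ⟪(β • e i - (β * γ) • e j) - (β • e k - (β * γ) • e l),
      (β • e i - (β * γ) • e j) - (β • e k - (β * γ) • e l)⟫ = a^2 := by
    rw [real_inner_self_eq_norm_sq, ← dist_eq_norm, hd]
  simp only [inner_sub_left, inner_sub_right, real_inner_smul_left, real_inner_smul_right,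
    hip] at hsq
  rcases eq_or_ne i k with h4|h4 <;> rcases eq_or_ne j l with h5|h5 <;>
    rcases eq_or_ne i l with h6|h6 <;> rcases eq_or_ne j k with h7|h7
  all_goals first
    | exact ⟨h4, h5, Or.inl h6⟩
    | exact ⟨h4, h5, Or.inr h7⟩
    | (exfalso; omega)
    | (exfalso;
       simp [h4, h5, h6, h7, Ne.symm h6, Ne.symm h7, hij', hkl'] at hsq;
       nlinarith [hsq, ha, mul_pos hβ hβ, mul_pos (mul_pos hβ hβ) hγ, sq_nonneg (β*γ)])
    | (exfalso;
       simp [h4, hkl', Ne.symm hkl', h5, Ne.symm h5, h6, Ne.symm h6, h7, Ne.symm h7] at hsq;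
       exact h1 (by linear_combination hsq))
    | (exfalso;
       simp [h5, hij', Ne.symm hij', h4, Ne.symm h4, h6, Ne.symm h6, h7, Ne.symm h7] at hsq;
       exact h2 (by linear_combination hsq))
    | (exfalso;
       simp [hij', Ne.symm hij', hkl', Ne.symm hkl', h4, Ne.symm h4, h5, Ne.symm h5,
         h6, Ne.symm h6, h7, Ne.symm h7] at hsq;
       exact h3 (by linear_combination hsq))

/-- If none of the squared distances `2β²γ²`, `2β²`, `2β²(1+γ²)` equals `a² = 2β²(1+γ+γ²)`,
then the configuration `Y_A = {β e_i - βγ e_j : i < j}` contains no equilateral triangle with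
side length `a`: no three points of `Y_A` are pairwise at distance `a`. -/
theorem YA_no_equilateral_triangle
    {H : Type*} [NormedAddCommGroup H] [InnerProductSpace ℝ H]
    (e : ℕ → H) (he : Orthonormal ℝ e)
    (a γ β : ℝ) (hβ : 0 < β) (hγ : 0 < γ)
    (ha : a^2 = 2 * β^2 * (1 + γ + γ^2))
    (h1 : 2 * β^2 * γ^2 ≠ a^2) (h2 : 2 * β^2 ≠ a^2) (h3 : 2 * β^2 * (1 + γ^2) ≠ a^2)
    (YA : Set H)
    (hYA : YA = {v | ∃ i j : ℕ, i < j ∧ v = β • e i - (β * γ) • e j}) :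
    ¬ ∃ p ∈ YA, ∃ q ∈ YA, ∃ r ∈ YA,
        p ≠ q ∧ q ≠ r ∧ p ≠ r ∧
        dist p q = a ∧ dist q r = a ∧ dist p r = a := by
  subst hYA
  rintro ⟨p, ⟨i, j, hij, rfl⟩, q, ⟨k, l, hkl, rfl⟩, r, ⟨m, n, hmn, rfl⟩,
    -, -, -, d1, d2, d3⟩
  obtain ⟨c1, c2, c3⟩ := pair_cond e he a γ β hβ hγ ha h1 h2 h3 i j k l hij hkl d1
  obtain ⟨c4, c5, c6⟩ := pair_cond e he a γ β hβ hγ ha h1 h2 h3 k l m n hkl hmn d2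
  obtain ⟨c7, c8, c9⟩ := pair_cond e he a γ β hβ hγ ha h1 h2 h3 i j m n hij hmn d3
  omega
end

section
/- Let M = (m_{ij})_{0≤i,j≤d} be a symmetric real matrix with zero diagonal such that ∑_{0≤i<j≤d} m_{ij} λ_i λ_j < 0 for all (λ_0,…,λ_d) with ∑λ_i = 0 and ∑λ_i² = 1. Then there exists a set of d+1 affinely independent points x_0,…,x_d in ℝ^d with ‖x_i − x_j‖² = m_{ij} for all i ≠ j. -/
-- doubling lemma
lemma schoenberg_pair_double {n : ℕ} (f : Fin n → Fin n → ℝ)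
    (hf : ∀ i j, f i j = f j i) (h0 : ∀ i, f i i = 0) :
    ∑ i, ∑ j, f i j =
      2 * ∑ p ∈ Finset.univ.filter (fun p : Fin n × Fin n => p.1 < p.2), f p.1 p.2 := by
  classical
  rw [show (∑ i, ∑ j, f i j) = ∑ p : Fin n × Fin n, f p.1 p.2 from (Fintype.sum_prod_type (fun p : Fin n × Fin n => f p.1 p.2)).symm]
  rw [← Finset.sum_filter_add_sum_filter_not Finset.univ (fun p : Fin n × Fin n => p.1 < p.2)
    (fun p => f p.1 p.2)]
  have h2 : ∑ p ∈ Finset.univ.filter (fun p : Fin n × Fin n => ¬ p.1 < p.2), f p.1 p.2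
      = ∑ p ∈ Finset.univ.filter (fun p : Fin n × Fin n => p.1 < p.2), f p.1 p.2 := by
    rw [← Finset.sum_filter_add_sum_filter_not
      (Finset.univ.filter (fun p : Fin n × Fin n => ¬ p.1 < p.2))
      (fun p : Fin n × Fin n => p.2 < p.1) (fun p => f p.1 p.2)]
    have hzero : ∑ p ∈ (Finset.univ.filter (fun p : Fin n × Fin n => ¬ p.1 < p.2)).filter
        (fun p : Fin n × Fin n => ¬ p.2 < p.1), f p.1 p.2 = 0 := by
      apply Finset.sum_eq_zero
      intro p hp
      simp only [Finset.mem_filter] at hp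
      have : p.1 = p.2 := le_antisymm (not_lt.mp hp.2) (not_lt.mp hp.1.2)
      rw [this, h0]
    rw [hzero, add_zero]
    have hset : (Finset.univ.filter (fun p : Fin n × Fin n => ¬ p.1 < p.2)).filter
        (fun p : Fin n × Fin n => p.2 < p.1)
        = Finset.univ.filter (fun p : Fin n × Fin n => p.2 < p.1) := by
      rw [Finset.filter_filter]
      apply Finset.filter_congr
      intro p _
      constructor
      · rintro ⟨_, h⟩; exact h
      · intro h; exact ⟨not_lt.mpr h.le, h⟩
    rw [hset]
    apply Finset.sum_nbij' (fun p => Prod.swap p) (fun p => Prod.swap p)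
    · intro p hp; simp only [Finset.mem_filter] at *; exact ⟨Finset.mem_univ _, hp.2⟩
    · intro p hp; simp only [Finset.mem_filter] at *; exact ⟨Finset.mem_univ _, hp.2⟩
    · intro p _; simp
    · intro p _; simp
    · intro p _; exact hf _ _
  rw [h2]; ring

lemma schoenberg_form (d : ℕ) (m : Fin (d+1) → Fin (d+1) → ℝ)
    (hsymm : ∀ i j, m i j = m j i) (hdiag : ∀ i, m i i = 0) (v : Fin d → ℝ) :
    ∑ i, ∑ j, ((m 0 i.succ + m 0 j.succ - m i.succ j.succ)/2) * v i * v j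
    = -(1/2) * ∑ i, ∑ j, m i j * (Fin.cons (-(∑ k, v k)) v : Fin (d+1) → ℝ) i
        * (Fin.cons (-(∑ k, v k)) v : Fin (d+1) → ℝ) j := by
  set T := ∑ k, v k with hT
  set S := ∑ k, m 0 k.succ * v k with hS
  set lam : Fin (d+1) → ℝ := Fin.cons (-T) v with hlam
  have hinner0 : ∑ j, m 0 j * lam 0 * lam j = -T * S := by
    rw [Fin.sum_univ_succ]
    simp only [hlam, Fin.cons_zero, Fin.cons_succ, hdiag 0]
    rw [hS, Finset.mul_sum]
    simp only [mul_zero, zero_mul, zero_add]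
    apply Finset.sum_congr rfl; intro j _; ring
  have hinneri : ∀ i : Fin d, ∑ j, m i.succ j * lam i.succ * lam j
      = m 0 i.succ * v i * (-T) + ∑ j, m i.succ j.succ * v i * v j := by
    intro i
    rw [Fin.sum_univ_succ]
    simp only [hlam, Fin.cons_zero, Fin.cons_succ, hsymm i.succ 0]
  have hRHS : ∑ i, ∑ j, m i j * lam i * lam j
      = -T * S + (-T * S + ∑ i, ∑ j, m i.succ j.succ * v i * v j) := by
    rw [Fin.sum_univ_succ, hinner0]
    congr 1
    rw [Finset.sum_congr rfl (fun i _ => hinneri i), Finset.sum_add_distrib]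
    congr 1
    rw [hS, Finset.mul_sum]
    apply Finset.sum_congr rfl; intro i _; ring
  have hL1 : ∑ i, ∑ j, (m 0 i.succ) * v i * v j = S * T := by
    rw [hS, hT, Finset.sum_mul]
    apply Finset.sum_congr rfl; intro i _
    rw [Finset.mul_sum]
  have hL2 : ∑ i : Fin d, ∑ j, (m 0 j.succ) * v i * v j = T * S := by
    rw [hS, hT, Finset.sum_mul]
    apply Finset.sum_congr rfl; intro i _
    rw [Finset.mul_sum]
    apply Finset.sum_congr rfl; intro j _; ring
  have expand : ∑ i, ∑ j, ((m 0 i.succ + m 0 j.succ - m i.succ j.succ)/2) * v i * v j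
      = (1/2) * (∑ i, ∑ j, (m 0 i.succ) * v i * v j)
        + (1/2) * (∑ i : Fin d, ∑ j, (m 0 j.succ) * v i * v j)
        - (1/2) * (∑ i, ∑ j, m i.succ j.succ * v i * v j) := by
    simp only [Finset.mul_sum]
    rw [← Finset.sum_add_distrib, ← Finset.sum_sub_distrib]
    apply Finset.sum_congr rfl; intro i _
    rw [← Finset.sum_add_distrib, ← Finset.sum_sub_distrib]
    apply Finset.sum_congr rfl; intro j _; ring
  rw [expand, hL1, hL2, hRHS]; ring

lemma schoenberg_posdef (d : ℕ) (m : Fin (d+1) → Fin (d+1) → ℝ)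
    (hsymm : ∀ i j, m i j = m j i) (hdiag : ∀ i, m i i = 0)
    (hneg : ∀ lam : Fin (d+1) → ℝ, ∑ i, lam i = 0 → ∑ i, (lam i)^2 = 1 →
      ∑ p ∈ Finset.univ.filter (fun p : Fin (d+1) × Fin (d+1) => p.1 < p.2),
        m p.1 p.2 * lam p.1 * lam p.2 < 0) :
    Matrix.PosDef (Matrix.of fun i j : Fin d =>
      (m 0 i.succ + m 0 j.succ - m i.succ j.succ)/2) := by
  refine Matrix.PosDef.of_dotProduct_mulVec_pos ?_ ?_
  · -- Hermitian
    rw [Matrix.IsHermitian]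
    ext i j
    simp only [Matrix.conjTranspose_apply, Matrix.of_apply, star_trivial]
    rw [hsymm 0 j.succ, hsymm 0 i.succ, hsymm j.succ i.succ]  -- guess; fix with ring later
    ring
  · intro v hv
    set lam : Fin (d+1) → ℝ := Fin.cons (-(∑ k, v k)) v with hlamdef
    have hsum0 : ∑ i, lam i = 0 := by
      rw [Fin.sum_univ_succ]
      simp [hlamdef]
    have hlamne : ∃ i, lam i ≠ 0 := by
      have : ∃ k, v k ≠ 0 := by
        by_contra h
        push_neg at h
        exact hv (funext h)
      obtain ⟨k, hk⟩ := this
      exact ⟨k.succ, by simpa [hlamdef] using hk⟩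
    have hsq : 0 < ∑ i, (lam i)^2 := by
      obtain ⟨i, hi⟩ := hlamne
      apply Finset.sum_pos' (fun j _ => sq_nonneg _)
      exact ⟨i, Finset.mem_univ i, by positivity⟩
    set c : ℝ := Real.sqrt (∑ i, (lam i)^2) with hc
    have hcpos : 0 < c := Real.sqrt_pos.mpr hsq
    have hc2 : c^2 = ∑ i, (lam i)^2 := Real.sq_sqrt hsq.le
    have h1 : ∑ i, (lam i / c) = 0 := by
      rw [← Finset.sum_div, hsum0, zero_div]
    have h2 : ∑ i, (lam i / c)^2 = 1 := by
      simp only [div_pow]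
      rw [← Finset.sum_div, ← hc2, div_self (by positivity)]
    have h3 := hneg (fun i => lam i / c) h1 h2
    have h4 : ∑ p ∈ Finset.univ.filter (fun p : Fin (d+1) × Fin (d+1) => p.1 < p.2),
        m p.1 p.2 * (lam p.1 / c) * (lam p.2 / c)
        = (∑ p ∈ Finset.univ.filter (fun p : Fin (d+1) × Fin (d+1) => p.1 < p.2),
        m p.1 p.2 * lam p.1 * lam p.2) / c^2 := by
      rw [Finset.sum_div]
      apply Finset.sum_congr rfl; intro p _
      ring
    have hQ' : ∑ p ∈ Finset.univ.filter (fun p : Fin (d+1) × Fin (d+1) => p.1 < p.2),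
        m p.1 p.2 * lam p.1 * lam p.2 < 0 := by
      rw [h4] at h3
      by_contra h
      push_neg at h
      exact absurd h3 (not_lt.mpr (div_nonneg h (by positivity)))
    -- doubling
    have hdouble := schoenberg_pair_double (fun i j => m i j * lam i * lam j)
      (fun i j => by show m i j * lam i * lam j = m j i * lam j * lam i; rw [hsymm i j]; ring)
      (fun i => by show m i i * lam i * lam i = 0; rw [hdiag]; ring)
    have hform := schoenberg_form d m hsymm hdiag v
    have hdot : dotProduct (star v) (Matrix.mulVec (Matrix.of (fun i j : Fin d =>
        (m 0 i.succ + m 0 j.succ - m i.succ j.succ)/2)) v)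
        = ∑ i, ∑ j, ((m 0 i.succ + m 0 j.succ - m i.succ j.succ)/2) * v i * v j := by
      simp only [dotProduct, Matrix.mulVec, star_trivial, Matrix.of_apply]
      apply Finset.sum_congr rfl; intro i _
      rw [Finset.mul_sum]
      apply Finset.sum_congr rfl; intro j _
      ring
    rw [hdot, hform, hdouble]
    nlinarith [hQ']

/-- Schoenberg's theorem (strict case): a symmetric matrix with zero diagonal whose quadratic
form is strictly negative on the hyperplane `∑ λᵢ = 0` (intersected with the unit sphere) is
the squared-distance matrix of a nondegenerate `d`-dimensional simplex in `ℝ^d`. -/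
theorem schoenberg_strict_negative_type
    (d : ℕ) (m : Fin (d+1) → Fin (d+1) → ℝ)
    (hsymm : ∀ i j, m i j = m j i) (hdiag : ∀ i, m i i = 0)
    (hneg : ∀ lam : Fin (d+1) → ℝ, ∑ i, lam i = 0 → ∑ i, (lam i)^2 = 1 →
      ∑ p ∈ Finset.univ.filter (fun p : Fin (d+1) × Fin (d+1) => p.1 < p.2),
        m p.1 p.2 * lam p.1 * lam p.2 < 0) :
    ∃ x : Fin (d+1) → EuclideanSpace ℝ (Fin d),
      AffineIndependent ℝ x ∧ ∀ i j, i ≠ j → (dist (x i) (x j))^2 = m i j := by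
  classical
  have hPD := schoenberg_posdef d m hsymm hdiag hneg
  open scoped MatrixOrder in
  obtain ⟨B, hB⟩ := CStarAlgebra.nonneg_iff_eq_star_mul_self.mp hPD.posSemidef.nonneg
  rw [Matrix.star_eq_conjTranspose] at hB
  have hG : ∀ k l : Fin d, ∑ r, B r k * B r l
      = (m 0 k.succ + m 0 l.succ - m k.succ l.succ)/2 := by
    intro k l
    have := congrFun (congrFun hB k) l
    simp only [Matrix.of_apply, Matrix.mul_apply, Matrix.conjTranspose_apply,
      star_trivial] at this
    rw [← this]
  set x : Fin (d+1) → EuclideanSpace ℝ (Fin d) :=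
    fun i => Fin.cases (0 : EuclideanSpace ℝ (Fin d))
      (fun k => (WithLp.equiv 2 (Fin d → ℝ)).symm (fun r => B r k)) i with hx
  have hx0 : ∀ r, x 0 r = 0 := by intro r; simp [hx]
  have hxs : ∀ k r, x k.succ r = B r k := by
    intro k r; simp [hx, WithLp.equiv_symm_apply]
  have key : ∀ i j : Fin (d+1), (dist (x i) (x j))^2 = ∑ r, (x i r - x j r)^2 := by
    intro i j
    rw [EuclideanSpace.dist_eq, Real.sq_sqrt (by positivity)]
    apply Finset.sum_congr rfl; intro r _
    rw [Real.dist_eq, sq_abs]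
  refine ⟨x, ?_, ?_⟩
  · -- affine independence
    rw [affineIndependent_iff_linearIndependent_vsub ℝ x 0]
    rw [← linearIndependent_equiv (finSuccAboveEquiv (0 : Fin (d+1)))]
    have hcomp : ((fun i : {i : Fin (d+1) // i ≠ 0} => x ↑i -ᵥ x 0)
        ∘ (finSuccAboveEquiv (0 : Fin (d+1)))) = fun k : Fin d => x k.succ := by
      funext k
      simp only [Function.comp_apply, finSuccAboveEquiv_apply, Fin.zero_succAbove]
      show x k.succ -ᵥ x 0 = x k.succ
      rw [vsub_eq_sub, show x 0 = 0 from rfl, sub_zero]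
    rw [hcomp]
    rw [Fintype.linearIndependent_iff]
    intro g hg
    have hBg : Matrix.mulVec B g = 0 := by
      funext r
      have h0 := congrArg (EuclideanSpace.proj (𝕜 := ℝ) r) hg
      rw [map_sum] at h0
      simp only [PiLp.proj_apply, map_smul, smul_eq_mul, hxs, map_zero] at h0
      have hmv : (B.mulVec g) r = ∑ i, g i * B r i := by
        simp [Matrix.mulVec, dotProduct, mul_comm]
      rw [hmv]
      simpa using h0
    have hGg : Matrix.mulVec (Matrix.of fun i j : Fin d =>
        (m 0 i.succ + m 0 j.succ - m i.succ j.succ)/2) g = 0 := by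
      rw [hB, ← Matrix.mulVec_mulVec, hBg, Matrix.mulVec_zero]
    intro i
    by_contra hgi
    have hgne : g ≠ 0 := fun h => hgi (congrFun h i)
    have := hPD.dotProduct_mulVec_pos hgne
    rw [hGg] at this
    simp [dotProduct_zero] at this
  · intro i j hij
    rw [key]
    induction i using Fin.cases with
    | zero =>
      induction j using Fin.cases with
      | zero => exact absurd rfl hij
      | succ l =>
        have : ∑ r, (x 0 r - x l.succ r)^2 = ∑ r, B r l * B r l := by
          apply Finset.sum_congr rfl; intro r _
          rw [hx0, hxs]; ring
        rw [this, hG l l, hdiag]; ring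
    | succ k =>
      induction j using Fin.cases with
      | zero =>
        have : ∑ r, (x k.succ r - x 0 r)^2 = ∑ r, B r k * B r k := by
          apply Finset.sum_congr rfl; intro r _
          rw [hx0, hxs]; ring
        rw [this, hG k k, hdiag, hsymm k.succ 0]; ring
      | succ l =>
        have h1 : ∑ r, (x k.succ r - x l.succ r)^2
            = ∑ r, (B r k * B r k + B r l * B r l - 2*(B r k * B r l)) := by
          apply Finset.sum_congr rfl; intro r _
          rw [hxs, hxs]; ring
        rw [h1, Finset.sum_sub_distrib, Finset.sum_add_distrib, ← Finset.mul_sum,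
          hG k k, hG l l, hG k l, hdiag, hdiag]
        ring
end

section
/- Let d ≥ 1 be an integer and β, ε > 0 with ε < β/(64d²). Let (d_{ij})_{0≤i<j≤d} be real numbers with β − ε ≤ d_{ij} ≤ β + ε for all i<j. Then there exist d+1 affinely independent points x_0,…,x_d ∈ ℝ^d with ‖x_i − x_j‖ = d_{ij} for all 0 ≤ i < j ≤ d. -/
open Matrix Finset in
/-- A real matrix whose entries are uniformly close to those of `b • (1 + J)`
(diagonal `2b`, off-diagonal `b`) is positive definite provided `d * η < b`. -/
lemma posdef_of_near {d : ℕ} (G : Matrix (Fin d) (Fin d) ℝ) (b η : ℝ)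
    (hsym : ∀ i j, G j i = G i j)
    (hnear : ∀ i j, |G i j - b * (if i = j then 2 else 1)| ≤ η)
    (hη : 0 ≤ η) (hb : (d : ℝ) * η < b) : G.PosDef := by
  classical
  have hbpos : 0 < b := lt_of_le_of_lt (by positivity : (0:ℝ) ≤ (d:ℝ) * η) hb
  refine Matrix.PosDef.of_dotProduct_mulVec_pos ?_ ?_
  · ext i j
    simp [Matrix.conjTranspose_apply, hsym i j]
  · intro x hx
    have hstar : star x = x := by simp
    rw [hstar]
    set H : Matrix (Fin d) (Fin d) ℝ := fun i j => G i j - b * (if i = j then 2 else 1) with hHdef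
    set S := ∑ j, x j with hS
    have key : ∀ i, (G *ᵥ x) i = b * (x i + S) + ∑ j, H i j * x j := by
      intro i
      have : ∀ j, G i j * x j = b * (if i = j then x j else 0) + b * x j + H i j * x j := by
        intro j
        by_cases h : i = j <;> simp [hHdef, h] <;> ring
      simp only [Matrix.mulVec, dotProduct, this, Finset.sum_add_distrib,
        ← Finset.mul_sum, Finset.sum_ite_eq (Finset.univ : Finset (Fin d)) i x]
      simp [hS]
      ring
    have hQ : dotProduct x (G *ᵥ x) =
        b * ((∑ i, x i ^ 2) + S ^ 2) + ∑ i, ∑ j, x i * (H i j * x j) := by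
      simp only [dotProduct, key, mul_add, Finset.sum_add_distrib, Finset.mul_sum]
      have e1 : ∑ i, x i * (b * x i) = ∑ i, b * x i ^ 2 :=
        Finset.sum_congr rfl fun i _ => by ring
      have e2 : ∑ i, x i * (b * S) = b * S ^ 2 := by rw [← Finset.sum_mul, ← hS]; ring
      rw [e1, e2]
    rw [hQ]
    have habs : |∑ i, ∑ j, x i * (H i j * x j)| ≤ η * (∑ i, |x i|) ^ 2 := by
      calc |∑ i, ∑ j, x i * (H i j * x j)| ≤ ∑ i, |∑ j, x i * (H i j * x j)| :=
            Finset.abs_sum_le_sum_abs _ _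
        _ ≤ ∑ i, ∑ j, |x i * (H i j * x j)| :=
            Finset.sum_le_sum fun i _ => Finset.abs_sum_le_sum_abs _ _
        _ ≤ ∑ i, ∑ j, |x i| * (η * |x j|) := by
            refine Finset.sum_le_sum fun i _ => Finset.sum_le_sum fun j _ => ?_
            rw [abs_mul, abs_mul]
            have hH : |H i j| ≤ η := hnear i j
            gcongr
        _ = η * (∑ i, |x i|) ^ 2 := by
            simp only [← Finset.mul_sum, ← Finset.sum_mul]
            ring
    have hCS : (∑ i, |x i|) ^ 2 ≤ (d : ℝ) * ∑ i, |x i| ^ 2 := by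
      have := sq_sum_le_card_mul_sum_sq (s := (Finset.univ : Finset (Fin d))) (f := fun i => |x i|)
      simpa using this
    have hxx : 0 < ∑ i, x i ^ 2 := by
      obtain ⟨i, hi⟩ := Function.ne_iff.mp hx
      have hi' : x i ≠ 0 := by simpa using hi
      have h2 : 0 < x i ^ 2 := sq_abs (x i) ▸ pow_pos (abs_pos.mpr hi') 2
      exact Finset.sum_pos' (fun j _ => sq_nonneg _) ⟨i, Finset.mem_univ i, h2⟩
    have hsq : ∑ i, |x i| ^ 2 = ∑ i, x i ^ 2 := by simp [sq_abs]
    have herr : -((d : ℝ) * η * ∑ i, x i ^ 2) ≤ ∑ i, ∑ j, x i * (H i j * x j) := by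
      have h1 : |∑ i, ∑ j, x i * (H i j * x j)| ≤ (d : ℝ) * η * ∑ i, x i ^ 2 := by
        calc |∑ i, ∑ j, x i * (H i j * x j)| ≤ η * (∑ i, |x i|) ^ 2 := habs
          _ ≤ η * ((d : ℝ) * ∑ i, x i ^ 2) := by
              rw [← hsq]; exact mul_le_mul_of_nonneg_left hCS hη
          _ = (d : ℝ) * η * ∑ i, x i ^ 2 := by ring
      linarith [neg_abs_le (∑ i, ∑ j, x i * (H i j * x j))]
    nlinarith [mul_pos (sub_pos.mpr hb) hxx, mul_nonneg hbpos.le (sq_nonneg S), herr]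

open Matrix in
/-- A positive definite real matrix is the Gram matrix of linearly independent vectors
in Euclidean space. -/
lemma gram_realization {d : ℕ} (G : Matrix (Fin d) (Fin d) ℝ) (hG : G.PosDef) :
    ∃ y : Fin d → EuclideanSpace ℝ (Fin d), LinearIndependent ℝ y ∧
      ∀ i j, inner ℝ (y i) (y j) = G i j := by
  classical
  open scoped MatrixOrder in set B := CFC.sqrt G with hBdef
  open scoped MatrixOrder in have hBsq : B * B = G := CFC.sqrt_mul_sqrt_self G hG.posSemidef.nonneg
  open scoped MatrixOrder in have hBherm : B.IsHermitian := (CFC.sqrt_nonneg G).posSemidef.isHermitian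
  have hBsymm : Bᵀ = B := by
    have := hBherm
    rwa [Matrix.IsHermitian, Matrix.conjTranspose_eq_transpose_of_trivial] at this
  refine ⟨fun i => (WithLp.equiv 2 (Fin d → ℝ)).symm (B i), ?_, ?_⟩
  · have hdet : IsUnit B := by
      rw [Matrix.isUnit_iff_isUnit_det]
      have h2 : B.det * B.det = G.det := by rw [← Matrix.det_mul, hBsq]
      have : G.det ≠ 0 := hG.det_pos.ne'
      exact isUnit_iff_ne_zero.mpr (fun h => this (by rw [← h2, h, mul_zero]))
    have hli : LinearIndependent ℝ (fun i => B i) :=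
      Matrix.linearIndependent_rows_iff_isUnit.mpr hdet
    exact hli.map' (WithLp.linearEquiv 2 ℝ (Fin d → ℝ)).symm.toLinearMap
      (LinearEquiv.ker _)
  · intro i j
    simp only [PiLp.inner_apply, RCLike.inner_apply, conj_trivial, WithLp.equiv_symm_apply, WithLp.ofLp_toLp]
    rw [show (∑ k, B j k * B i k) = ∑ k, B i k * B j k from
      Finset.sum_congr rfl fun k _ => mul_comm _ _]
    calc ∑ k, B i k * B j k = (B * Bᵀ) i j := by
          simp [Matrix.mul_apply, Matrix.transpose_apply]
      _ = G i j := by rw [hBsymm, hBsq]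

lemma sq_cancel_aux {u v : ℝ} (hu : 0 ≤ u) (hv : 0 ≤ v) (h : u ^ 2 = v ^ 2) : u = v := by
  have : u = Real.sqrt (u ^ 2) := (Real.sqrt_sq hu).symm
  rw [this, h, Real.sqrt_sq hv]

/-- Almost regular distance matrices are realizable: if all prescribed distances `d_{ij}` lie in
`[β - ε, β + ε]` with `0 < ε < β/(64 d²)`, then there is a nondegenerate `d`-dimensional simplex
in `ℝ^d` realizing them. -/
theorem almost_regular_simplex_realizable
    (d : ℕ) (hd : 1 ≤ d) (β ε : ℝ) (hβ : 0 < β) (hε : 0 < ε)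
    (hεβ : ε < β / (64 * (d : ℝ)^2))
    (D : Fin (d+1) → Fin (d+1) → ℝ)
    (hD : ∀ i j : Fin (d+1), i < j → β - ε ≤ D i j ∧ D i j ≤ β + ε) :
    ∃ x : Fin (d+1) → EuclideanSpace ℝ (Fin d),
      AffineIndependent ℝ x ∧ ∀ i j : Fin (d+1), i < j → dist (x i) (x j) = D i j := by
  classical
  have hd' : (1:ℝ) ≤ (d:ℝ) := by exact_mod_cast hd
  have h64 : (0:ℝ) < 64 * (d:ℝ)^2 := by positivity
  have hεd : ε * (64 * (d:ℝ)^2) < β := (lt_div_iff₀ h64).mp hεβ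
  have hd2 : (1:ℝ) ≤ (d:ℝ)^2 := by nlinarith
  have hεltβ : ε < β := by nlinarith [mul_le_mul_of_nonneg_left hd2 hε.le]
  set Dv : Fin (d+1) → Fin (d+1) → ℝ := fun i j => if i < j then D i j else D j i with hDvdef
  have hDvsymm : ∀ i j, Dv i j = Dv j i := by
    intro i j
    rcases lt_trichotomy i j with h | h | h
    · simp [hDvdef, h, not_lt.mpr h.le]
    · simp [h]
    · simp [hDvdef, h, not_lt.mpr h.le]
  have hDvb : ∀ i j, i ≠ j → β - ε ≤ Dv i j ∧ Dv i j ≤ β + ε := by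
    intro i j hij
    rcases lt_or_gt_of_ne hij with h | h
    · simpa [hDvdef, h] using hD i j h
    · simpa [hDvdef, not_lt.mpr h.le] using hD j i h
  have hDveq : ∀ i j, i < j → Dv i j = D i j := by
    intro i j h; simp [hDvdef, h]
  have hsqb : ∀ t : ℝ, β - ε ≤ t → t ≤ β + ε → |t^2 - β^2| ≤ 2*β*ε + ε^2 := by
    intro t h1 h2
    rw [abs_le]
    constructor <;> nlinarith
  set a : Fin d → ℝ := fun i => (Dv 0 i.succ)^2 with hadef
  set c : Fin d → Fin d → ℝ := fun i j => if i = j then 0 else (Dv i.succ j.succ)^2 with hcdef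
  set G : Matrix (Fin d) (Fin d) ℝ := fun i j => (a i + a j - c i j)/2 with hGdef
  set η : ℝ := (3/2) * (2*β*ε + ε^2) with hηdef
  have hab : ∀ i, |a i - β^2| ≤ 2*β*ε + ε^2 := by
    intro i
    have h0 : (0 : Fin (d+1)) ≠ i.succ := (Fin.succ_ne_zero i).symm
    obtain ⟨h1, h2⟩ := hDvb 0 i.succ h0
    exact hsqb _ h1 h2
  have hcb : ∀ i j, i ≠ j → |c i j - β^2| ≤ 2*β*ε + ε^2 := by
    intro i j hij
    have h0 : i.succ ≠ j.succ := fun h => hij (Fin.succ_injective d h)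
    obtain ⟨h1, h2⟩ := hDvb i.succ j.succ h0
    simpa [hcdef, hij] using hsqb _ h1 h2
  have hGsym : ∀ i j, G j i = G i j := by
    intro i j
    have : c j i = c i j := by
      rcases eq_or_ne i j with h | h
      · simp [h]
      · simp [hcdef, h, h.symm, hDvsymm i.succ j.succ]
    simp [hGdef, this]; ring
  have hGnear : ∀ i j, |G i j - (β^2/2) * (if i = j then 2 else 1)| ≤ η := by
    intro i j
    rcases eq_or_ne i j with h | h
    · subst h
      have := hab i
      simp only [hGdef, hcdef, if_pos rfl, if_pos rfl, if_true]
      have hrw : (a i + a i - 0)/2 - β^2/2*2 = a i - β^2 := by ring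
      rw [hrw]
      calc |a i - β^2| ≤ 2*β*ε + ε^2 := this
        _ ≤ η := by rw [hηdef]; nlinarith
    · have h1 := hab i
      have h2 := hab j
      have h3 := hcb i j h
      simp only [hGdef, if_neg h]
      have hrw : (a i + a j - c i j)/2 - β^2/2*1 =
          ((a i - β^2) + (a j - β^2) - (c i j - β^2))/2 := by ring
      rw [hrw, hηdef]
      rw [abs_le] at h1 h2 h3 ⊢
      constructor <;> nlinarith
  have hηnn : 0 ≤ η := by rw [hηdef]; nlinarith
  have hdη : (d:ℝ) * η < β^2/2 := by
    rw [hηdef]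
    nlinarith [mul_lt_mul_of_pos_left hεd (by positivity : (0:ℝ) < 9*β/64),
      mul_pos hε hβ, sq_nonneg ((d:ℝ) - 1), mul_pos (mul_pos hε hβ) (mul_pos h64 h64)]
  have hGpd : G.PosDef := posdef_of_near G (β^2/2) η hGsym hGnear hηnn hdη
  obtain ⟨y, hyli, hyinner⟩ := gram_realization G hGpd
  -- norms of the Gram vectors
  have hnormsq : ∀ i, ‖y i‖ ^ 2 = G i i := by
    intro i
    rw [← real_inner_self_eq_norm_sq]
    exact hyinner i i
  refine ⟨Fin.cases 0 y, ?_, ?_⟩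
  · rw [affineIndependent_iff_linearIndependent_vsub ℝ _ 0]
    refine (linearIndependent_equiv (finSuccAboveEquiv (0 : Fin (d+1)))).mp ?_
    have heq : ((fun i : {x : Fin (d+1) // x ≠ 0} =>
        (Fin.cases 0 y : Fin (d+1) → EuclideanSpace ℝ (Fin d)) ↑i -ᵥ Fin.cases 0 y 0)
        ∘ (finSuccAboveEquiv (0 : Fin (d+1)))) = y := by
      funext i
      simp [finSuccAboveEquiv_apply, Fin.zero_succAbove, vsub_eq_sub]
    rw [heq]
    exact hyli
  · intro i j hij
    rcases Fin.eq_zero_or_eq_succ j with rfl | ⟨jp, rfl⟩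
    · exact absurd hij (Fin.not_lt_zero i)
    have hβε : (0:ℝ) ≤ β - ε := by linarith
    rcases Fin.eq_zero_or_eq_succ i with rfl | ⟨ip, rfl⟩
    · have hnn : 0 ≤ D 0 jp.succ := le_trans hβε (hD _ _ hij).1
      have hxz : (Fin.cases 0 y : Fin (d+1) → EuclideanSpace ℝ (Fin d)) 0 = 0 := rfl
      have hxs : (Fin.cases 0 y : Fin (d+1) → EuclideanSpace ℝ (Fin d)) jp.succ = y jp :=
        Fin.cases_succ jp
      rw [hxz, hxs, dist_zero_left]
      refine sq_cancel_aux (norm_nonneg _) hnn ?_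
      rw [hnormsq jp]
      have : G jp jp = a jp := by simp [hGdef, hcdef]
      rw [this, show a jp = (Dv 0 jp.succ)^2 from rfl, hDveq 0 jp.succ hij]
    · have hlt : ip < jp := by
        rwa [Fin.succ_lt_succ_iff] at hij
      have hne : ip ≠ jp := hlt.ne
      have hnn : 0 ≤ D ip.succ jp.succ := le_trans hβε (hD _ _ hij).1
      have hxsi : (Fin.cases 0 y : Fin (d+1) → EuclideanSpace ℝ (Fin d)) ip.succ = y ip :=
        Fin.cases_succ ip
      have hxsj : (Fin.cases 0 y : Fin (d+1) → EuclideanSpace ℝ (Fin d)) jp.succ = y jp :=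
        Fin.cases_succ jp
      rw [hxsi, hxsj, dist_eq_norm]
      refine sq_cancel_aux (norm_nonneg _) hnn ?_
      rw [norm_sub_sq_real, hnormsq ip, hnormsq jp, hyinner ip jp]
      have hcval : c ip jp = (Dv ip.succ jp.succ)^2 := by simp [hcdef, hne]
      have hsucclt : ip.succ < jp.succ := hij
      have hGii : G ip ip = a ip := by simp [hGdef, hcdef]
      have hGjj : G jp jp = a jp := by simp [hGdef, hcdef]
      have hGij : G ip jp = (a ip + a jp - c ip jp)/2 := rfl
      have hkey : G ip ip - 2 * G ip jp + G jp jp = c ip jp := by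
        rw [hGii, hGjj, hGij]; ring
      rw [hkey, hcval, hDveq _ _ hsucclt]
end

section
/- Let S = {x_0,…,x_d} be a d-dimensional simplex (d+1 affinely independent points in ℝ^n) with squared distances m_{ij} = ‖x_i − x_j‖². Then there exists γ > 0 such that ∑_{0≤i<j≤d} m_{ij} λ_i λ_j ≤ −γ for all (λ_0,…,λ_d) with ∑λ_i = 0 and ∑λ_i² = 1, and moreover for β = γ/(8d²) there exists a d-dimensional simplex S₁ = {y_0,…,y_d} with ‖y_i − y_j‖² = ‖x_i − x_j‖² − β for all i ≠ j. -/
open Finset in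
lemma sum_pairs_eq_half {N : ℕ} (g : Fin N → Fin N → ℝ)
    (hsym : ∀ i j, g i j = g j i) (hdiag : ∀ i, g i i = 0) :
    ∑ p ∈ Finset.univ.filter (fun p : Fin N × Fin N => p.1 < p.2), g p.1 p.2
      = (∑ i, ∑ j, g i j) / 2 := by
  have hfull : ∑ i, ∑ j, g i j = ∑ p : Fin N × Fin N, g p.1 p.2 := by
    rw [← Finset.univ_product_univ, Finset.sum_product]
  have hsplit := Finset.sum_filter_add_sum_filter_not (Finset.univ : Finset (Fin N × Fin N))
      (fun p => p.1 < p.2) (fun p => g p.1 p.2)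
  have hgt : ∑ p ∈ Finset.univ.filter (fun p : Fin N × Fin N => ¬ p.1 < p.2), g p.1 p.2
      = ∑ p ∈ Finset.univ.filter (fun p : Fin N × Fin N => p.2 < p.1), g p.1 p.2 := by
    refine (Finset.sum_subset ?_ ?_).symm
    · intro p hp
      simp only [Finset.mem_filter, Finset.mem_univ, true_and] at hp ⊢
      exact not_lt_of_gt hp
    · intro p hp hp'
      simp only [Finset.mem_filter, Finset.mem_univ, true_and] at hp hp'
      have : p.1 = p.2 := le_antisymm (not_lt.mp hp') (not_lt.mp hp)
      rw [this, hdiag]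
  have hswap : ∑ p ∈ Finset.univ.filter (fun p : Fin N × Fin N => p.2 < p.1), g p.1 p.2
      = ∑ p ∈ Finset.univ.filter (fun p : Fin N × Fin N => p.1 < p.2), g p.1 p.2 := by
    refine Finset.sum_nbij' Prod.swap Prod.swap ?_ ?_ ?_ ?_ ?_
    · intro p hp; simpa using (Finset.mem_filter.mp hp).2
    · intro p hp; simpa using (Finset.mem_filter.mp hp).2
    · intro p _; simp
    · intro p _; simp
    · intro p _; exact hsym p.1 p.2
  rw [hfull, ← hsplit, hgt, hswap]; ring

lemma full_sum_identity' {N n : ℕ} (x : Fin N → EuclideanSpace ℝ (Fin n))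
    (lam : Fin N → ℝ) (h : ∑ i, lam i = 0) :
    ∑ i, ∑ j, (dist (x i) (x j))^2 * lam i * lam j
      = -2 * ‖∑ i, lam i • x i‖^2 := by
  have hinner : ∑ i, ∑ j, (inner ℝ (x i) (x j) : ℝ) * lam i * lam j
      = ‖∑ i, lam i • x i‖^2 := by
    rw [← real_inner_self_eq_norm_sq, sum_inner]
    refine Finset.sum_congr rfl fun i _ => ?_
    rw [inner_sum]
    refine Finset.sum_congr rfl fun j _ => ?_
    rw [real_inner_smul_left, real_inner_smul_right]; ring
  have expand : ∀ i j, (dist (x i) (x j))^2 * lam i * lam j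
      = ‖x i‖^2 * lam i * lam j + lam i * (‖x j‖^2 * lam j)
        - 2 * ((inner ℝ (x i) (x j) : ℝ) * lam i * lam j) := by
    intro i j
    rw [dist_eq_norm, norm_sub_sq_real]; ring
  have h1 : ∑ i : Fin N, ∑ j, ‖x i‖^2 * lam i * lam j = 0 := by
    refine Finset.sum_eq_zero fun i _ => ?_
    rw [← Finset.mul_sum, h, mul_zero]
  have h2 : ∑ i : Fin N, ∑ j, lam i * (‖x j‖^2 * lam j) = 0 := by
    simp only [← Finset.mul_sum]
    rw [← Finset.sum_mul, h, zero_mul]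
  calc ∑ i, ∑ j, (dist (x i) (x j))^2 * lam i * lam j
      = ∑ i, ∑ j, (‖x i‖^2 * lam i * lam j + lam i * (‖x j‖^2 * lam j)
          - 2 * ((inner ℝ (x i) (x j) : ℝ) * lam i * lam j)) :=
        Finset.sum_congr rfl fun i _ => Finset.sum_congr rfl fun j _ => expand i j
    _ = (∑ i, ∑ j, ‖x i‖^2 * lam i * lam j) + (∑ i, ∑ j, lam i * (‖x j‖^2 * lam j))
          - 2 * ∑ i, ∑ j, (inner ℝ (x i) (x j) : ℝ) * lam i * lam j := by
        simp only [Finset.sum_add_distrib, Finset.sum_sub_distrib, ← Finset.mul_sum]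
    _ = -2 * ‖∑ i, lam i • x i‖^2 := by
        rw [h1, h2, hinner]; ring

lemma exists_gamma {m n : ℕ} (x : Fin (m+2) → EuclideanSpace ℝ (Fin n))
    (hx : AffineIndependent ℝ x) :
    ∃ γ : ℝ, 0 < γ ∧ ∀ lam : Fin (m+2) → ℝ, ∑ i, lam i = 0 →
      γ * ∑ i, (lam i)^2 ≤ ‖∑ i, lam i • x i‖^2 := by
  set E := EuclideanSpace ℝ (Fin (m+2))
  set K : Set E := {lam | ∑ i, lam i = 0 ∧ ∑ i, (lam i)^2 = 1} with hKdef
  have hcont1 : Continuous fun lam : E => ∑ i, lam i :=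
    continuous_finset_sum _ fun i _ => (EuclideanSpace.proj i).continuous
  have hcont2 : Continuous fun lam : E => ∑ i, (lam i)^2 :=
    continuous_finset_sum _ fun i _ => ((EuclideanSpace.proj i).continuous).pow 2
  have hclosed : IsClosed K := by
    have : K = ((fun lam : E => ∑ i, lam i) ⁻¹' {0}) ∩
        ((fun lam : E => ∑ i, (lam i)^2) ⁻¹' {1}) := by
      ext lam; simp [hKdef]
    rw [this]
    exact (isClosed_singleton.preimage hcont1).inter (isClosed_singleton.preimage hcont2)
  have hsub : K ⊆ Metric.closedBall (0 : E) 1 := by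
    intro lam hlam
    rw [Metric.mem_closedBall, dist_zero_right]
    have : ‖lam‖ = Real.sqrt (∑ i, (lam i)^2) := by
      rw [EuclideanSpace.norm_eq]
      congr 1
      exact Finset.sum_congr rfl fun i _ => by rw [Real.norm_eq_abs, sq_abs]
    rw [this, hlam.2, Real.sqrt_one]
  have hK : IsCompact K :=
    IsCompact.of_isClosed_subset (isCompact_closedBall (0 : E) 1) hclosed hsub
  have hne : K.Nonempty := by
    refine ⟨WithLp.toLp 2 (fun i => (Real.sqrt 2)⁻¹ * ((if i = 0 then (1:ℝ) else 0)
        - (if i = 1 then (1:ℝ) else 0)) : Fin (m+2) → ℝ), ?_, ?_⟩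
    · simp only [PiLp.toLp_apply]
      rw [← Finset.mul_sum, Finset.sum_sub_distrib]
      simp
    · simp only [PiLp.toLp_apply, mul_pow]
      rw [← Finset.mul_sum]
      have : ∀ i : Fin (m+2), ((if i = 0 then (1:ℝ) else 0) - (if i = 1 then (1:ℝ) else 0))^2
          = (if i = 0 then (1:ℝ) else 0) + (if i = 1 then (1:ℝ) else 0) := by
        intro i
        by_cases h0 : i = 0 <;> by_cases h1 : i = 1 <;>
          simp [h0, h1] at * <;> ring_nf <;> simp_all
      rw [Finset.sum_congr rfl fun i _ => this i, Finset.sum_add_distrib]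
      simp only [Finset.sum_ite_eq', Finset.mem_univ, if_true]
      rw [show (1:ℝ) + 1 = 2 by norm_num]
      rw [← Real.sqrt_inv]
      rw [Real.sq_sqrt (by norm_num)]
      norm_num
  obtain ⟨lam₀, hlam₀K, hmin⟩ := hK.exists_isMinOn hne
    (((continuous_finset_sum Finset.univ fun i _ =>
      ((EuclideanSpace.proj i).continuous).smul continuous_const).norm).pow 2).continuousOn
    (f := fun lam : E => ‖∑ i, lam i • x i‖^2)
  set γ := ‖∑ i, lam₀ i • x i‖^2 with hγdef
  have hγpos : 0 < γ := by
    rcases lt_or_eq_of_le (sq_nonneg ‖∑ i, lam₀ i • x i‖) with h | h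
    · simpa [hγdef] using h
    · exfalso
      have hzero : ∑ i, lam₀ i • x i = 0 := by
        have := h.symm
        rw [pow_eq_zero_iff (by norm_num)] at this
        exact norm_eq_zero.mp this
      have hall := affineIndependent_iff.mp hx Finset.univ lam₀ hlam₀K.1 hzero
      have : ∑ i, (lam₀ i)^2 = 0 :=
        Finset.sum_eq_zero fun i _ => by rw [hall i (Finset.mem_univ i)]; ring
      rw [hlam₀K.2] at this; norm_num at this
  refine ⟨γ, hγpos, fun lam hsum => ?_⟩
  by_cases hz : ∑ i, (lam i)^2 = 0
  · have hall : ∀ i ∈ Finset.univ, (lam i)^2 = 0 :=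
      (Finset.sum_eq_zero_iff_of_nonneg fun i _ => sq_nonneg _).mp hz
    have : ∑ i, lam i • x i = 0 :=
      Finset.sum_eq_zero fun i _ => by
        have := pow_eq_zero_iff (n := 2) (by norm_num) |>.mp (hall i (Finset.mem_univ i))
        rw [this, zero_smul]
    rw [hz, this, mul_zero]; simp
  · have hspos : 0 < ∑ i, (lam i)^2 :=
      lt_of_le_of_ne (Finset.sum_nonneg fun i _ => sq_nonneg _) (Ne.symm hz)
    set s := ∑ i, (lam i)^2 with hsdef
    set μ : E := WithLp.toLp 2 (fun i => (Real.sqrt s)⁻¹ * lam i : Fin (m+2) → ℝ) with hμdef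
    have hsqrtpos : 0 < Real.sqrt s := Real.sqrt_pos.mpr hspos
    have hμK : μ ∈ K := by
      constructor
      · show ∑ i, (Real.sqrt s)⁻¹ * lam i = 0
        rw [← Finset.mul_sum, hsum, mul_zero]
      · show ∑ i, ((Real.sqrt s)⁻¹ * lam i)^2 = 1
        simp only [mul_pow, ← Finset.mul_sum]
        rw [← hsdef, ← Real.sqrt_inv, Real.sq_sqrt (inv_nonneg.mpr hspos.le)]
        exact inv_mul_cancel₀ hz
    have hle : γ ≤ ‖∑ i, μ i • x i‖^2 := hmin hμK
    have hμx : ∑ i, μ i • x i = (Real.sqrt s)⁻¹ • ∑ i, lam i • x i := by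
      rw [Finset.smul_sum]
      exact Finset.sum_congr rfl fun i _ => (smul_smul _ _ _).symm
    have : ‖∑ i, μ i • x i‖^2 = s⁻¹ * ‖∑ i, lam i • x i‖^2 := by
      rw [hμx, norm_smul, Real.norm_eq_abs, abs_of_pos (by positivity), mul_pow,
        ← Real.sqrt_inv, Real.sq_sqrt (inv_nonneg.mpr hspos.le)]
    rw [this] at hle
    calc γ * s ≤ (s⁻¹ * ‖∑ i, lam i • x i‖^2) * s :=
          mul_le_mul_of_nonneg_right hle hspos.le
      _ = ‖∑ i, lam i • x i‖^2 := by field_simp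

lemma gram_realize {d : ℕ} {G : Matrix (Fin d) (Fin d) ℝ} (hG : G.PosSemidef) :
    ∃ v : Fin d → EuclideanSpace ℝ (Fin d), ∀ i j, (inner ℝ (v i) (v j) : ℝ) = G i j := by
  open scoped MatrixOrder in obtain ⟨B, hB⟩ := CStarAlgebra.nonneg_iff_eq_star_mul_self.mp hG.nonneg
  refine ⟨fun i => WithLp.toLp 2 (fun k => B k i : Fin d → ℝ), fun i j => ?_⟩
  rw [hB]
  simp [Matrix.mul_apply, PiLp.inner_apply, Matrix.star_eq_conjTranspose, Matrix.conjTranspose_apply, mul_comm]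
lemma quad_identity {k n : ℕ} (x : Fin (k+2) → EuclideanSpace ℝ (Fin n)) (β : ℝ)
    (m' : Fin (k+2) → Fin (k+2) → ℝ)
    (hm' : ∀ i j, m' i j = (dist (x i) (x j))^2 - if i = j then 0 else β)
    (G : Matrix (Fin (k+1)) (Fin (k+1)) ℝ)
    (hG : ∀ i j, G i j = (m' i.succ 0 + m' j.succ 0 - m' i.succ j.succ)/2)
    (c : Fin (k+1) → ℝ) :
    ∑ i, ∑ j, c i * c j * G i j
      = ‖∑ i, (Fin.cons (-∑ t, c t) c : Fin (k+2) → ℝ) i • x i‖^2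
        - (β/2) * ∑ i, ((Fin.cons (-∑ t, c t) c : Fin (k+2) → ℝ) i)^2 := by
  have hm'symm : ∀ i j, m' i j = m' j i := by
    intro i j
    rw [hm', hm', dist_comm]
    by_cases h : i = j
    · simp [h]
    · simp [h, Ne.symm h]
  have hm'diag : ∀ i, m' i i = 0 := by intro i; simp [hm']
  set S := ∑ t, c t with hS
  set lam : Fin (k+2) → ℝ := Fin.cons (-S) c with hlam
  have hlam0 : lam 0 = -S := rfl
  have hlamsucc : ∀ i, lam i.succ = c i := fun i => Fin.cons_succ _ _ i
  have hlamsum : ∑ i, lam i = 0 := by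
    rw [Fin.sum_univ_succ]
    simp only [hlam0, hlamsucc]
    rw [← hS]; ring
  -- LHS computation
  have T1 : ∑ i, ∑ j, m' i.succ 0 * c i * c j = (∑ i, m' i.succ 0 * c i) * S := by
    calc ∑ i, ∑ j, m' i.succ 0 * c i * c j = ∑ i, (m' i.succ 0 * c i) * S := by
          refine Finset.sum_congr rfl fun i _ => ?_
          rw [hS, Finset.mul_sum]
      _ = (∑ i, m' i.succ 0 * c i) * S := (Finset.sum_mul _ _ _).symm
  have T2 : ∑ i, ∑ j, m' j.succ 0 * c i * c j = (∑ i, m' i.succ 0 * c i) * S := by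
    rw [Finset.sum_comm, ← T1]
    exact Finset.sum_congr rfl fun i _ => Finset.sum_congr rfl fun j _ => by ring
  have hL : ∑ i, ∑ j, c i * c j * G i j
      = S * (∑ i, m' i.succ 0 * c i) - (1/2) * ∑ i, ∑ j, m' i.succ j.succ * c i * c j := by
    have expand : ∀ i j : Fin (k+1), c i * c j * G i j
        = (m' i.succ 0 * c i * c j)/2 + (m' j.succ 0 * c i * c j)/2
          - (m' i.succ j.succ * c i * c j)/2 := by
      intro i j; rw [hG]; ring
    calc ∑ i, ∑ j, c i * c j * G i j
        = ∑ i, ∑ j, ((m' i.succ 0 * c i * c j)/2 + (m' j.succ 0 * c i * c j)/2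
            - (m' i.succ j.succ * c i * c j)/2) :=
          Finset.sum_congr rfl fun i _ => Finset.sum_congr rfl fun j _ => expand i j
      _ = (∑ i, ∑ j, m' i.succ 0 * c i * c j)/2 + (∑ i, ∑ j, m' j.succ 0 * c i * c j)/2
            - (∑ i, ∑ j, m' i.succ j.succ * c i * c j)/2 := by
          simp only [Finset.sum_add_distrib, Finset.sum_sub_distrib, ← Finset.sum_div]
      _ = _ := by rw [T1, T2]; ring
  -- RHS computation
  have inner0 : ∑ j, m' 0 j * lam 0 * lam j = (-S) * ∑ i, m' i.succ 0 * c i := by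
    rw [Fin.sum_univ_succ (f := fun j => m' 0 j * lam 0 * lam j)]
    rw [hm'diag 0]
    simp only [hlam0, hlamsucc, zero_mul]
    rw [zero_add, Finset.mul_sum]
    exact Finset.sum_congr rfl fun j _ => by rw [hm'symm 0 j.succ]; ring
  have innerS : ∀ i : Fin (k+1), ∑ j, m' i.succ j * lam i.succ * lam j
      = m' i.succ 0 * c i * (-S) + ∑ j, m' i.succ j.succ * c i * c j := by
    intro i
    rw [Fin.sum_univ_succ (f := fun j => m' i.succ j * lam i.succ * lam j)]
    simp only [hlam0, hlamsucc]
  have hR : ∑ i, ∑ j, m' i j * lam i * lam j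
      = 2 * ((-S) * ∑ i, m' i.succ 0 * c i) + ∑ i, ∑ j, m' i.succ j.succ * c i * c j := by
    rw [Fin.sum_univ_succ (f := fun i => ∑ j, m' i j * lam i * lam j)]
    rw [inner0, Finset.sum_congr rfl fun i _ => innerS i, Finset.sum_add_distrib]
    rw [show ∑ i, m' i.succ 0 * c i * (-S) = (∑ i, m' i.succ 0 * c i) * (-S) from
      (Finset.sum_mul _ _ _).symm]
    ring
  have step1 : ∑ i, ∑ j, c i * c j * G i j
      = -(1/2) * ∑ i, ∑ j, m' i j * lam i * lam j := by
    rw [hL, hR]; ring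
  -- step 2
  have step2 : ∑ i, ∑ j, m' i j * lam i * lam j
      = (∑ i, ∑ j, (dist (x i) (x j))^2 * lam i * lam j) + β * ∑ i, (lam i)^2 := by
    have per : ∀ i : Fin (k+2), ∑ j, m' i j * lam i * lam j
        = (∑ j, (dist (x i) (x j))^2 * lam i * lam j) - β * lam i * (∑ j, lam j)
          + β * (lam i)^2 := by
      intro i
      have hterm : ∀ j, m' i j * lam i * lam j
          = (dist (x i) (x j))^2 * lam i * lam j - β * (lam i * lam j)
            + (if i = j then β * (lam i * lam j) else 0) := by
        intro j; rw [hm']; by_cases h : i = j <;> simp [h] <;> ring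
      rw [Finset.sum_congr rfl fun j _ => hterm j, Finset.sum_add_distrib,
        Finset.sum_sub_distrib]
      rw [Finset.sum_ite_eq]
      simp only [Finset.mem_univ, if_true]
      rw [show ∑ j, β * (lam i * lam j) = β * lam i * ∑ j, lam j from by
        rw [Finset.mul_sum]; exact Finset.sum_congr rfl fun j _ => by ring]
      ring
    rw [Finset.sum_congr rfl fun i _ => per i, hlamsum]
    simp only [mul_zero, sub_zero]
    rw [Finset.sum_add_distrib, ← Finset.mul_sum]
  rw [step1, step2, full_sum_identity' x lam hlamsum]
  ring
lemma realize_shrunk {k n : ℕ} (x : Fin (k+2) → EuclideanSpace ℝ (Fin n))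
    (γ β : ℝ) (hβpos : 0 < β) (hβγ : β < 2*γ)
    (hbound : ∀ lam : Fin (k+2) → ℝ, ∑ i, lam i = 0 →
      γ * ∑ i, (lam i)^2 ≤ ‖∑ i, lam i • x i‖^2) :
    ∃ y : Fin (k+2) → EuclideanSpace ℝ (Fin (k+1)),
      AffineIndependent ℝ y ∧
      ∀ i j, i ≠ j → (dist (y i) (y j))^2 = (dist (x i) (x j))^2 - β := by
  classical
  set m' : Fin (k+2) → Fin (k+2) → ℝ :=
    fun i j => (dist (x i) (x j))^2 - if i = j then 0 else β with hm'def
  have hm' : ∀ i j, m' i j = (dist (x i) (x j))^2 - if i = j then 0 else β := fun i j => rfl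
  have hm'symm : ∀ i j, m' i j = m' j i := by
    intro i j
    rw [hm', hm', dist_comm]
    by_cases h : i = j
    · simp [h]
    · simp [h, Ne.symm h]
  have hm'diag : ∀ i, m' i i = 0 := by intro i; simp [hm']
  set G : Matrix (Fin (k+1)) (Fin (k+1)) ℝ :=
    fun i j => (m' i.succ 0 + m' j.succ 0 - m' i.succ j.succ)/2 with hGdef
  have hG : ∀ i j, G i j = (m' i.succ 0 + m' j.succ 0 - m' i.succ j.succ)/2 := fun i j => rfl
  have key := quad_identity x β m' hm' G hG
  have formpos : ∀ c : Fin (k+1) → ℝ, c ≠ 0 → 0 < ∑ i, ∑ j, c i * c j * G i j := by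
    intro c hc
    rw [key c]
    set lam : Fin (k+2) → ℝ := Fin.cons (-∑ t, c t) c with hlam
    have hlamsum : ∑ i, lam i = 0 := by
      rw [Fin.sum_univ_succ]
      simp [hlam, Fin.cons_zero, Fin.cons_succ]
    have hb := hbound lam hlamsum
    have hcsq : 0 < ∑ i, (c i)^2 := by
      have hex : ∃ i, c i ≠ 0 := by
        by_contra h; push_neg at h; exact hc (funext h)
      obtain ⟨i0, hi0⟩ := hex
      exact Finset.sum_pos' (fun i _ => sq_nonneg _) ⟨i0, Finset.mem_univ _, by positivity⟩
    have hlamsq : ∑ i : Fin (k+1), (c i)^2 ≤ ∑ i : Fin (k+2), (lam i)^2 := by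
      rw [Fin.sum_univ_succ (f := fun i : Fin (k+2) => (lam i)^2)]
      simp only [hlam, Fin.cons_succ]
      nlinarith [sq_nonneg (lam 0)]
    have hp1 : 0 < (2*γ - β) * ∑ i, (c i)^2 :=
      mul_pos (by linarith) hcsq
    have hp2 : 0 ≤ (2*γ - β) * (∑ i, (lam i)^2 - ∑ i, (c i)^2) :=
      mul_nonneg (by linarith) (by linarith)
    nlinarith [hb]
  have hGpsd : G.PosSemidef := by
    refine Matrix.PosSemidef.of_dotProduct_mulVec_nonneg ?_ ?_
    · ext i j
      rw [Matrix.conjTranspose_apply, star_trivial]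
      simp only [hGdef]
      rw [hm'symm j.succ i.succ]
      ring
    · intro c
      rcases eq_or_ne c 0 with rfl | hc
      · simp
      · have h := (formpos c hc).le
        have hdp : dotProduct (star c) (G.mulVec c) = ∑ i, ∑ j, c i * c j * G i j := by
          simp only [dotProduct, Matrix.mulVec, star_trivial, Finset.mul_sum]
          refine Finset.sum_congr rfl fun i _ => Finset.sum_congr rfl fun j _ => ?_
          ring
        rw [hdp]; exact h
  obtain ⟨v, hv⟩ := gram_realize hGpsd
  have hdd : ∀ a b : EuclideanSpace ℝ (Fin (k+1)), (dist a b)^2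
      = (inner ℝ a a : ℝ) - 2*(inner ℝ a b : ℝ) + (inner ℝ b b : ℝ) := by
    intro a b
    rw [dist_eq_norm, norm_sub_sq_real, real_inner_self_eq_norm_sq,
      real_inner_self_eq_norm_sq]
  set y : Fin (k+2) → EuclideanSpace ℝ (Fin (k+1)) := Fin.cons 0 v with hy
  have hy0 : y 0 = 0 := rfl
  have hys : ∀ t, y t.succ = v t := fun t => Fin.cons_succ _ _ t
  have main0 : ∀ t : Fin (k+1), (dist (y 0) (y t.succ))^2 = (dist (x 0) (x t.succ))^2 - β := by
    intro t
    rw [hy0, hys, hdd]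
    simp only [inner_zero_left, inner_zero_right]
    rw [hv t t, hG t t, hm'diag t.succ, hm' t.succ 0]
    rw [if_neg (Fin.succ_ne_zero t)]
    rw [dist_comm (x t.succ) (x 0)]
    ring
  have mainS : ∀ s t : Fin (k+1), s ≠ t →
      (dist (y s.succ) (y t.succ))^2 = (dist (x s.succ) (x t.succ))^2 - β := by
    intro s t hst
    rw [hys, hys, hdd, hv s s, hv s t, hv t t, hG s s, hG s t, hG t t]
    rw [hm'diag s.succ, hm'diag t.succ, hm' s.succ t.succ]
    rw [if_neg (fun h => hst (Fin.succ_injective _ h))]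
    ring
  refine ⟨y, ?_, ?_⟩
  · rw [affineIndependent_iff]
    intro s w hw0 hwsum
    set w' : Fin (k+2) → ℝ := fun i => if i ∈ s then w i else 0 with hw'
    have hsum' : ∑ i, w' i = 0 := by
      rw [← hw0]
      simp [hw', Finset.sum_ite_mem]
    have hvec : ∑ i, w' i • y i = 0 := by
      rw [← hwsum]
      simp [hw', ite_smul, Finset.sum_ite_mem]
    set c : Fin (k+1) → ℝ := fun i => w' i.succ with hc
    have hcv : ∑ i, c i • v i = 0 := by
      rw [Fin.sum_univ_succ] at hvec
      rw [hy0, smul_zero, zero_add] at hvec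
      simpa [hys] using hvec
    have hczero : c = 0 := by
      by_contra hcne
      have hpos := formpos c hcne
      have hzero : ∑ i, ∑ j, c i * c j * G i j = 0 := by
        have : ∑ i, ∑ j, c i * c j * G i j
            = (inner ℝ (∑ i, c i • v i) (∑ j, c j • v j) : ℝ) := by
          rw [sum_inner]
          refine Finset.sum_congr rfl fun i _ => ?_
          rw [inner_sum]
          refine Finset.sum_congr rfl fun j _ => ?_
          rw [real_inner_smul_left, real_inner_smul_right, hv i j]
          ring
        rw [this, hcv, inner_zero_left]
      linarith
    intro e he
    have hw'e : w' e = w e := if_pos he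
    have hall : ∀ i, w' i = 0 := by
      intro i
      rcases Fin.eq_zero_or_eq_succ i with rfl | ⟨t, rfl⟩
      · rw [Fin.sum_univ_succ] at hsum'
        have h2 : ∑ t : Fin (k+1), w' t.succ = 0 :=
          Finset.sum_eq_zero fun t _ => congrFun hczero t
        linarith [hsum', h2]
      · exact congrFun hczero t
    rw [← hw'e]; exact hall e
  · intro i j hij
    rcases Fin.eq_zero_or_eq_succ i with rfl | ⟨s, rfl⟩ <;>
      rcases Fin.eq_zero_or_eq_succ j with rfl | ⟨t, rfl⟩
    · exact absurd rfl hij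
    · exact main0 t
    · rw [dist_comm, dist_comm (x s.succ)]
      exact main0 s
    · exact mainS s t (fun h => hij (by rw [h]))
/-- Step 1 of the proof that simplices are P-Ramsey: the squared-distance form of a simplex is
uniformly strictly negative on the hyperplane `∑ λᵢ = 0`, and subtracting `β = γ/(8d²)` from
every squared distance still yields a realizable simplex. -/
theorem simplex_shrink_squared_distances
    (d n : ℕ) (x : Fin (d+1) → EuclideanSpace ℝ (Fin n))
    (hx : AffineIndependent ℝ x) :
    ∃ γ : ℝ, 0 < γ ∧
      (∀ lam : Fin (d+1) → ℝ, ∑ i, lam i = 0 → ∑ i, (lam i)^2 = 1 →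
        ∑ p ∈ Finset.univ.filter (fun p : Fin (d+1) × Fin (d+1) => p.1 < p.2),
          (dist (x p.1) (x p.2))^2 * lam p.1 * lam p.2 ≤ -γ) ∧
      ∃ y : Fin (d+1) → EuclideanSpace ℝ (Fin d),
        AffineIndependent ℝ y ∧
        ∀ i j, i ≠ j →
          (dist (y i) (y j))^2 = (dist (x i) (x j))^2 - γ / (8 * (d : ℝ)^2) := by
  cases d with
  | zero =>
    refine ⟨1, one_pos, ?_, ?_⟩
    · intro lam h1 h2
      exfalso
      simp only [Fin.sum_univ_succ, Finset.univ_eq_empty, Finset.sum_empty, add_zero] at h1 h2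
      rw [h1] at h2
      norm_num at h2
    · haveI : Subsingleton (Fin (0+1)) := Fin.subsingleton_one
      refine ⟨fun _ => 0, ?_, ?_⟩
      · exact affineIndependent_of_subsingleton ℝ _
      · intro i j hij
        exact absurd (Subsingleton.elim i j) hij
  | succ k =>
    obtain ⟨γ, hγpos, hbound⟩ := exists_gamma x hx
    refine ⟨γ, hγpos, ?_, ?_⟩
    · intro lam h1 h2
      have hsym : ∀ i j, (dist (x i) (x j))^2 * lam i * lam j
          = (dist (x j) (x i))^2 * lam j * lam i := by
        intro i j; rw [dist_comm]; ring
      have hdiag : ∀ i, (dist (x i) (x i))^2 * lam i * lam i = 0 := by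
        intro i; simp
      have heq : ∑ p ∈ Finset.univ.filter (fun p : Fin (k+1+1) × Fin (k+1+1) => p.1 < p.2),
          (dist (x p.1) (x p.2))^2 * lam p.1 * lam p.2
          = (∑ i, ∑ j, (dist (x i) (x j))^2 * lam i * lam j)/2 :=
        sum_pairs_eq_half _ hsym hdiag
      have hfull := full_sum_identity' x lam h1
      have hb := hbound lam h1
      rw [h2, mul_one] at hb
      rw [heq, hfull]
      linarith
    · have hone : (1:ℝ) ≤ ((k+1 : ℕ) : ℝ) := by
        exact_mod_cast Nat.one_le_iff_ne_zero.mpr (Nat.succ_ne_zero k)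
      have hden : (0:ℝ) < 8 * ((k+1 : ℕ) : ℝ)^2 := by nlinarith
      have hβpos : 0 < γ / (8 * ((k+1 : ℕ) : ℝ)^2) := div_pos hγpos hden
      have hc2 : (1:ℝ) ≤ ((k+1 : ℕ) : ℝ)^2 := by nlinarith
      have hβγ : γ / (8 * ((k+1 : ℕ) : ℝ)^2) < 2*γ := by
        rw [div_lt_iff₀ hden]
        nlinarith [mul_nonneg hγpos.le (sub_nonneg.mpr hc2)]
      exact realize_shrunk x γ _ hβpos hβγ hbound
end

section
/- Let x_0,…,x_d and z_0,…,z_d be points in a Euclidean space such that the squared distances satisfy ‖x_i − x_j‖² − ‖z_i − z_j‖² ∈ [β − ε, β + ε] for all i ≠ j, where ε < β/(64d²). Then there exist points w_0,…,w_d forming a d-dimensional simplex with ‖w_i − w_j‖² = ‖x_i − x_j‖² − ‖z_i − z_j‖², and the points f_i = (w_i, z_i) in the orthogonal direct sum satisfy ‖f_i − f_j‖ = ‖x_i − x_j‖ for all i, j; i.e., {f_0,…,f_d} is isometric to {x_0,…,x_d}. -/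
open Finset Matrix in
lemma aux_posdef (d : ℕ) (β ε : ℝ) (hβ : 0 < β) (hε : 0 < ε)
    (hεβ : ε < β / (64 * (d : ℝ)^2))
    (G : Matrix (Fin d) (Fin d) ℝ)
    (hHerm : G.IsHermitian)
    (hdiag : ∀ i, |G i i - β| ≤ ε)
    (hoff : ∀ i j, i ≠ j → |G i j - β/2| ≤ 3/2*ε) :
    G.PosDef := by
  refine Matrix.PosDef.of_dotProduct_mulVec_pos hHerm fun v hv => ?_
  obtain ⟨i0, hi0⟩ := Function.ne_iff.mp hv
  simp only [Pi.zero_apply] at hi0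
  have hd1 : (1 : ℝ) ≤ (d : ℝ) := by exact_mod_cast i0.pos
  have h64 : (0:ℝ) < 64 * (d:ℝ)^2 := by positivity
  have hεd : ε * (64 * (d:ℝ)^2) < β := by
    rw [div_eq_mul_inv] at hεβ
    calc ε * (64 * (d:ℝ)^2) < (β * (64 * (d:ℝ)^2)⁻¹) * (64*(d:ℝ)^2) :=
          mul_lt_mul_of_pos_right hεβ h64
      _ = β := by field_simp
  set S := ∑ i, (v i)^2 with hS
  set T := ∑ i, |v i| with hT
  have hSpos : 0 < S := by
    have h1 : (v i0)^2 ≤ S := by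
      apply Finset.single_le_sum (f := fun i => (v i)^2) (fun i _ => sq_nonneg _) (mem_univ i0)
    nlinarith [sq_abs (v i0), abs_pos.mpr hi0]
  have hTS : T^2 ≤ (d:ℝ) * S := by
    have := sq_sum_le_card_mul_sum_sq (s := (univ : Finset (Fin d))) (f := fun i => |v i|)
    simpa [hT, hS, sq_abs] using this
  have expand : v ⬝ᵥ G *ᵥ v = ∑ i, ∑ j, v i * G i j * v j := by
    simp only [dotProduct, Matrix.mulVec, dotProduct, Finset.mul_sum]
    exact Finset.sum_congr rfl fun i _ => Finset.sum_congr rfl fun j _ => by ring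
  have hsplit : ∀ i j, v i * G i j * v j
      = (β/2 * (v i * v j) + (if i = j then β/2 * (v i * v j) else 0))
        + v i * (G i j - β/2 * (if i = j then 2 else 1)) * v j := by
    intro i j; split <;> ring
  have hbase1 : ∑ i, ∑ j, β/2 * (v i * v j) = β/2 * (∑ i, v i)^2 := by
    rw [sq, Finset.sum_mul_sum, Finset.mul_sum]
    refine Finset.sum_congr rfl fun i _ => ?_
    rw [Finset.mul_sum]
  have hbase2 : ∑ i, ∑ j, (if i = j then β/2 * (v i * v j) else 0) = β/2 * S := by
    have h : ∀ i : Fin d, (∑ j, if i = j then β/2 * (v i * v j) else 0) = β/2 * (v i)^2 := by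
      intro i
      rw [Finset.sum_ite_eq univ i (fun j => β/2 * (v i * v j))]
      simp [sq]
    simp_rw [h]
    rw [hS, Finset.mul_sum]
  have hEbound : ∀ i j, |G i j - β/2 * (if i = j then 2 else 1)| ≤ 3/2*ε := by
    intro i j
    by_cases h : i = j
    · subst h
      have e : (if i = i then (2:ℝ) else 1) = 2 := if_pos rfl
      rw [e]
      have := abs_le.mp (hdiag i)
      rw [abs_le]
      constructor <;> [linarith [this.1]; linarith [this.2]]
    · rw [if_neg h]
      have := abs_le.mp (hoff i j h)
      rw [abs_le]
      constructor <;> [linarith [this.1]; linarith [this.2]]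
  have hR : |∑ i, ∑ j, v i * (G i j - β/2 * (if i = j then 2 else 1)) * v j| ≤ 3/2*ε * T^2 := by
    have step3 : ∑ i, ∑ j, |v i| * (3/2*ε) * |v j| = 3/2*ε * T^2 := by
      rw [hT, sq, Finset.sum_mul_sum, Finset.mul_sum]
      refine Finset.sum_congr rfl fun i _ => ?_
      rw [Finset.mul_sum]
      exact Finset.sum_congr rfl fun j _ => by ring
    calc |∑ i, ∑ j, v i * (G i j - β/2 * (if i = j then 2 else 1)) * v j|
        ≤ ∑ i, |∑ j, v i * (G i j - β/2 * (if i = j then 2 else 1)) * v j| :=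
          Finset.abs_sum_le_sum_abs _ _
      _ ≤ ∑ i, ∑ j, |v i * (G i j - β/2 * (if i = j then 2 else 1)) * v j| :=
          Finset.sum_le_sum fun i _ => Finset.abs_sum_le_sum_abs _ _
      _ ≤ ∑ i, ∑ j, |v i| * (3/2*ε) * |v j| := by
          refine Finset.sum_le_sum fun i _ => Finset.sum_le_sum fun j _ => ?_
          rw [abs_mul, abs_mul]
          exact mul_le_mul_of_nonneg_right
            (mul_le_mul_of_nonneg_left (hEbound i j) (abs_nonneg _)) (abs_nonneg _)
      _ = 3/2*ε * T^2 := step3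
  have hsum : v ⬝ᵥ G *ᵥ v
      = β/2 * (∑ i, v i)^2 + β/2 * S
        + ∑ i, ∑ j, v i * (G i j - β/2 * (if i = j then 2 else 1)) * v j := by
    rw [expand]
    simp_rw [hsplit, Finset.sum_add_distrib, hbase1, hbase2]
  have h3εd : 3/2*ε * ((d:ℝ) * S) < β/2 * S := by
    have : 3 * ε * (d:ℝ) < β := by nlinarith
    nlinarith
  have hstar : star v = v := by simp
  rw [hstar, hsum]
  have habs := abs_le.mp hR
  have hTT : 3/2*ε * T^2 ≤ 3/2*ε*((d:ℝ)*S) := by nlinarith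
  nlinarith [sq_nonneg (∑ i, v i)]

open Matrix MatrixOrder in
lemma aux_exists_gram (d : ℕ) (G : Matrix (Fin d) (Fin d) ℝ) (hG : G.PosDef) :
    ∃ wv : Fin d → EuclideanSpace ℝ (Fin d),
      ∀ i j, (inner ℝ (wv i) (wv j) : ℝ) = G i j := by
  have hps := hG.posSemidef
  set B := CFC.sqrt G with hB
  have hBB : B * B = G := CFC.sqrt_mul_sqrt_self G hps.nonneg
  have hBH : B.IsHermitian := (CFC.sqrt_nonneg G).posSemidef.1
  refine ⟨fun k => (WithLp.equiv 2 (Fin d → ℝ)).symm (fun t => B t k), fun i j => ?_⟩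
  have h1 : (inner ℝ ((WithLp.equiv 2 (Fin d → ℝ)).symm (fun t => B t i))
      ((WithLp.equiv 2 (Fin d → ℝ)).symm (fun t => B t j)) : ℝ) = ∑ t, B t i * B t j := by
    rw [PiLp.inner_apply]
    simp [mul_comm]
  rw [h1]
  have h2 : ∀ t, B t i = B i t := by
    intro t
    conv_lhs => rw [← hBH]
    simp [Matrix.conjTranspose_apply]
  calc ∑ t, B t i * B t j = ∑ t, B i t * B t j :=
        Finset.sum_congr rfl fun t _ => by rw [h2]
    _ = (B * B) i j := (Matrix.mul_apply).symm
    _ = G i j := by rw [hBB]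

/-- If the differences of squared distances `‖xᵢ - xⱼ‖² - ‖zᵢ - zⱼ‖²` all lie in
`[β - ε, β + ε]` with `ε < β/(64d²)`, then they are realized by a simplex `w`, and the
concatenated points `fᵢ = (wᵢ, zᵢ)` form an isometric copy of `{x₀, …, x_d}`. -/
theorem simplex_from_difference_of_squared_distances
    {H₁ H₂ : Type*} [NormedAddCommGroup H₁] [InnerProductSpace ℝ H₁]
    [NormedAddCommGroup H₂] [InnerProductSpace ℝ H₂]
    (d : ℕ) (β ε : ℝ) (hβ : 0 < β) (hε : 0 < ε) (hεβ : ε < β / (64 * (d : ℝ)^2))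
    (x : Fin (d+1) → H₁) (z : Fin (d+1) → H₂)
    (hxz : ∀ i j : Fin (d+1), i ≠ j →
      (dist (x i) (x j))^2 - (dist (z i) (z j))^2 ∈ Set.Icc (β - ε) (β + ε)) :
    ∃ w : Fin (d+1) → EuclideanSpace ℝ (Fin d),
      AffineIndependent ℝ w ∧
      (∀ i j : Fin (d+1), i ≠ j →
        (dist (w i) (w j))^2 = (dist (x i) (x j))^2 - (dist (z i) (z j))^2) ∧
      (∀ i j : Fin (d+1),
        dist ((WithLp.equiv 2 (EuclideanSpace ℝ (Fin d) × H₂)).symm (w i, z i))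
             ((WithLp.equiv 2 (EuclideanSpace ℝ (Fin d) × H₂)).symm (w j, z j))
          = dist (x i) (x j)) := by
  classical
  obtain ⟨c, hcdef⟩ : ∃ c : Fin (d+1) → Fin (d+1) → ℝ,
      c = fun i j => dist (x i) (x j) ^ 2 - dist (z i) (z j) ^ 2 := ⟨_, rfl⟩
  have hc : ∀ i j, c i j = dist (x i) (x j) ^ 2 - dist (z i) (z j) ^ 2 := by
    intro i j; rw [hcdef]
  have hc0 : ∀ i, c i i = 0 := by intro i; simp [hc]
  have hcs : ∀ i j, c i j = c j i := by intro i j; simp [hc, dist_comm]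
  have hmem : ∀ i j, i ≠ j → β - ε ≤ c i j ∧ c i j ≤ β + ε := by
    intro i j h
    rw [hc]
    exact ⟨(hxz i j h).1, (hxz i j h).2⟩
  obtain ⟨G, hGdef⟩ : ∃ G : Matrix (Fin d) (Fin d) ℝ,
      G = Matrix.of fun i j => (c 0 i.succ + c 0 j.succ - c i.succ j.succ) / 2 := ⟨_, rfl⟩
  have hGapp : ∀ i j, G i j = (c 0 i.succ + c 0 j.succ - c i.succ j.succ) / 2 := by
    intro i j; rw [hGdef]; rfl
  have hGsymm : ∀ i j, G i j = G j i := by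
    intro i j
    rw [hGapp, hGapp, hcs i.succ j.succ]
    ring
  have hGdiag : ∀ i, G i i = c 0 i.succ := by
    intro i
    rw [hGapp, hc0]
    ring
  have hHerm : G.IsHermitian := by
    ext i j
    simp only [Matrix.conjTranspose_apply, star_trivial]
    exact hGsymm j i
  have hne0 : ∀ i : Fin d, (0 : Fin (d+1)) ≠ i.succ := fun i => (Fin.succ_ne_zero i).symm
  have hdiag : ∀ i, |G i i - β| ≤ ε := by
    intro i
    rw [hGdiag]
    have := hmem 0 i.succ (hne0 i)
    rw [abs_le]
    constructor <;> linarith [this.1, this.2]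
  have hoff : ∀ i j, i ≠ j → |G i j - β/2| ≤ 3/2*ε := by
    intro i j hij
    have hij' : i.succ ≠ j.succ := fun h => hij (Fin.succ_injective _ h)
    have h1 := hmem 0 i.succ (hne0 i)
    have h2 := hmem 0 j.succ (hne0 j)
    have h3 := hmem i.succ j.succ hij'
    rw [hGapp, abs_le]
    constructor <;> [linarith [h1.1, h2.1, h3.2]; linarith [h1.2, h2.2, h3.1]]
  have hGpd : G.PosDef := aux_posdef d β ε hβ hε hεβ G hHerm hdiag hoff
  obtain ⟨wv, hwv⟩ := aux_exists_gram d G hGpd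
  obtain ⟨w, hwdef⟩ : ∃ w : Fin (d+1) → EuclideanSpace ℝ (Fin d),
      w = fun i => Fin.cases 0 wv i := ⟨_, rfl⟩
  have hw0 : w 0 = 0 := by rw [hwdef]; simp
  have hws : ∀ k, w k.succ = wv k := by intro k; rw [hwdef]; simp
  have hnormsq : ∀ k, ‖wv k‖ ^ 2 = c 0 k.succ := by
    intro k
    rw [← real_inner_self_eq_norm_sq, hwv, hGdiag]
  have key : ∀ i j : Fin (d+1), i ≠ j → dist (w i) (w j) ^ 2 = c i j := by
    intro i j hij
    induction i using Fin.cases with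
    | zero =>
      induction j using Fin.cases with
      | zero => exact absurd rfl hij
      | succ l =>
        rw [hw0, hws, dist_eq_norm, zero_sub, norm_neg, hnormsq]
    | succ k =>
      induction j using Fin.cases with
      | zero =>
        rw [hw0, hws, dist_eq_norm, sub_zero, hnormsq, hcs]
      | succ l =>
        have hkl : k ≠ l := fun h => hij (by rw [h])
        rw [hws, hws, dist_eq_norm, norm_sub_sq_real, hnormsq, hnormsq, hwv, hGapp]
        ring
  have hGram : ∀ b : Fin d → ℝ,
      (inner ℝ (∑ k, b k • wv k) (∑ k, b k • wv k) : ℝ) = dotProduct b (G.mulVec b) := by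
    intro b
    rw [sum_inner]
    simp only [dotProduct, Matrix.mulVec, dotProduct, Finset.mul_sum]
    refine Finset.sum_congr rfl fun k _ => ?_
    rw [real_inner_smul_left, inner_sum, Finset.mul_sum]
    refine Finset.sum_congr rfl fun l _ => ?_
    rw [real_inner_smul_right, hwv]
    ring
  have haff : AffineIndependent ℝ w := by
    rw [affineIndependent_iff]
    intro s g hg0 hgsum
    obtain ⟨Wt, hWt⟩ : ∃ Wt : Fin (d+1) → ℝ,
        Wt = fun e => if e ∈ s then g e else 0 := ⟨_, rfl⟩
    have hWs : ∀ e ∈ s, Wt e = g e := fun e he => by simp [hWt, he]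
    have hsum1 : ∑ e, Wt e = 0 := by
      rw [hWt]
      rw [Finset.sum_ite_mem Finset.univ s g, Finset.univ_inter]
      exact hg0
    have hsum2 : ∑ e, Wt e • w e = 0 := by
      have : ∑ e, Wt e • w e = ∑ e ∈ s, g e • w e := by
        rw [hWt]
        simp only [ite_smul, zero_smul]
        rw [Finset.sum_ite_mem, Finset.univ_inter]
      rw [this, hgsum]
    obtain ⟨a, ha⟩ : ∃ a : Fin d → ℝ, a = fun k => Wt k.succ := ⟨_, rfl⟩
    have hsplit2 : ∑ k, a k • wv k = 0 := by
      have := hsum2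
      rw [Fin.sum_univ_succ, hw0, smul_zero, zero_add] at this
      simpa [ha, hws] using this
    have hdot : dotProduct a (G.mulVec a) = 0 := by
      rw [← hGram, hsplit2, inner_zero_left]
    have ha0 : a = 0 := by
      by_contra hne
      have := hGpd.dotProduct_mulVec_pos hne
      rw [star_trivial, hdot] at this
      exact lt_irrefl 0 this
    have hak : ∀ k : Fin d, Wt k.succ = 0 := by
      intro k
      have h1 := congrFun ha0 k
      rw [ha] at h1
      simpa using h1
    have hWt0 : ∀ e, Wt e = 0 := by
      intro e
      induction e using Fin.cases with
      | zero =>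
        have := hsum1
        rw [Fin.sum_univ_succ] at this
        have hz : ∑ k : Fin d, Wt k.succ = 0 := by
          exact Finset.sum_eq_zero fun k _ => hak k
        linarith [this]
      | succ k => exact hak k
    intro e he
    rw [← hWs e he]
    exact hWt0 e
  refine ⟨w, haff, ?_, ?_⟩
  · intro i j hij
    exact (key i j hij).trans (hc i j)
  · intro i j
    by_cases hij : i = j
    · subst hij; simp
    · rw [WithLp.prod_dist_eq_of_L2]
      have hfst : ∀ p : EuclideanSpace ℝ (Fin d) × H₂,
          ((WithLp.equiv 2 (EuclideanSpace ℝ (Fin d) × H₂)).symm p).fst = p.1 := fun _ => rfl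
      have hsnd : ∀ p : EuclideanSpace ℝ (Fin d) × H₂,
          ((WithLp.equiv 2 (EuclideanSpace ℝ (Fin d) × H₂)).symm p).snd = p.2 := fun _ => rfl
      rw [hfst, hfst, hsnd, hsnd]
      have hk := key i j hij
      rw [hc] at hk
      have : dist (w i) (w j) ^ 2 + dist (z i) (z j) ^ 2 = dist (x i) (x j) ^ 2 := by
        rw [hk]; ring
      rw [this, Real.sqrt_sq dist_nonneg]
end

section
/- Let a > 0, γ > 0, β = a/√(2(1+γ+γ²)), and let Y' be any finite subset of Y_A = { β e_i − βγ e_j : i < j }. Then there exists Z ⊆ Y' with |Z| ≥ |Y'|/4 such that no two points of Z are at distance exactly a. -/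
open Finset in
/-- Every finite subset `Y'` of the configuration `Y_A = {β e_i - βγ e_j : i < j}` contains a
subset `Z` of size at least `|Y'|/4` with no two points at distance exactly `a`. -/
theorem YA_large_subset_without_distance_a
    {H : Type*} [NormedAddCommGroup H] [InnerProductSpace ℝ H]
    (e : ℕ → H) (he : Orthonormal ℝ e)
    (a γ β : ℝ) (ha : 0 < a) (hγ : 0 < γ)
    (hβ : β = a / Real.sqrt (2 * (1 + γ + γ^2)))
    (YA : Set H)
    (hYA : YA = {v | ∃ i j : ℕ, i < j ∧ v = β • e i - (β * γ) • e j})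
    (Y' : Finset H) (hY' : ↑Y' ⊆ YA) :
    ∃ Z ⊆ Y', (Y'.card : ℝ) / 4 ≤ (Z.card : ℝ) ∧
      ∀ p ∈ Z, ∀ q ∈ Z, p ≠ q → dist p q ≠ a := by
  classical
  rcases Y'.eq_empty_or_nonempty with rfl | hne
  · exact ⟨∅, le_refl _, by simp, by simp⟩
  have h2 : (0:ℝ) < 2 * (1 + γ + γ^2) := by positivity
  have hs2 : Real.sqrt (2 * (1 + γ + γ^2)) ^ 2 = 2 * (1 + γ + γ^2) :=
    Real.sq_sqrt h2.le
  have hspos : 0 < Real.sqrt (2 * (1 + γ + γ^2)) := Real.sqrt_pos.2 h2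
  have hβpos : 0 < β := by rw [hβ]; positivity
  have ha2 : a ^ 2 = β ^ 2 * (2 * (1 + γ + γ^2)) := by
    have : a = β * Real.sqrt (2 * (1 + γ + γ^2)) := by
      rw [hβ, div_mul_cancel₀ _ hspos.ne']
    rw [this, mul_pow, hs2]
  -- choose index pairs
  have hex : ∀ v ∈ Y', ∃ i j : ℕ, i < j ∧ v = β • e i - (β * γ) • e j := by
    intro v hv
    have := hY' hv
    rw [hYA] at this
    exact this
  choose! I J hIJ hrep using hex
  -- inner products of configuration points
  have horth := orthonormal_iff_ite.mp he
  have hinner : ∀ i j k l : ℕ,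
      (inner ℝ (β • e i - (β * γ) • e j) (β • e k - (β * γ) • e l) : ℝ) =
        β * β * (if i = k then (1:ℝ) else 0) - β * (β * γ) * (if i = l then (1:ℝ) else 0)
        - β * γ * β * (if j = k then (1:ℝ) else 0)
        + β * γ * (β * γ) * (if j = l then (1:ℝ) else 0) := by
    intro i j k l
    simp only [inner_sub_left, inner_sub_right, real_inner_smul_left, real_inner_smul_right,
      horth]
    ring
  -- key geometric fact
  have key : ∀ p ∈ Y', ∀ q ∈ Y', J p ≠ I q → J q ≠ I p →
      (I p, J p) ≠ (I q, J q) → dist p q ≠ a := by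
    intro p hp q hq h1 h2' hne' hdist
    have hd2 : ‖p - q‖ ^ 2 = a ^ 2 := by rw [← dist_eq_norm, hdist]
    rw [norm_sub_sq_real, ← real_inner_self_eq_norm_sq, ← real_inner_self_eq_norm_sq] at hd2
    rw [hrep p hp, hrep q hq] at hd2
    rw [hinner, hinner, hinner] at hd2
    have hij : I p ≠ J p := (hIJ p hp).ne
    have hkl : I q ≠ J q := (hIJ q hq).ne
    have hb2 : 0 < β * β := mul_pos hβpos hβpos
    simp only [if_neg hij, if_neg (Ne.symm hij), if_neg hkl, if_neg (Ne.symm hkl),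
      if_neg h1, if_neg (Ne.symm h2'), eq_self_iff_true, if_true,
      mul_zero, mul_one, sub_zero, add_zero] at hd2
    by_cases hik : I p = I q
    · by_cases hjl : J p = J q
      · exact hne' (by rw [hik, hjl])
      · rw [if_pos hik, if_neg hjl] at hd2
        nlinarith [mul_pos hb2 hγ, hb2]
    · by_cases hjl : J p = J q
      · rw [if_neg hik, if_pos hjl] at hd2
        nlinarith [mul_pos hb2 hγ, mul_pos (mul_pos hb2 hγ) hγ]
      · rw [if_neg hik, if_neg hjl] at hd2
        nlinarith [mul_pos hb2 hγ]
  -- combinatorial selection via averaging over colorings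
  set N := Y'.sup (fun v => max (I v) (J v)) + 1 with hN
  have hIN : ∀ v ∈ Y', I v < N := by
    intro v hv
    have h := Finset.le_sup (f := fun v => max (I v) (J v)) hv
    have := le_trans (le_max_left (I v) (J v)) h
    omega
  have hJN : ∀ v ∈ Y', J v < N := by
    intro v hv
    have h := Finset.le_sup (f := fun v => max (I v) (J v)) hv
    have := le_trans (le_max_right (I v) (J v)) h
    omega
  have hN2 : 2 ≤ N := by
    obtain ⟨v, hv⟩ := hne
    have h1 := Finset.le_sup (f := fun v => max (I v) (J v)) hv
    have h2' := le_trans (le_max_right (I v) (J v)) h1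
    have h3 := hIJ v hv
    omega
  -- counting colorings
  have hcount : ∀ i j : ℕ, i < N → j < N → i ≠ j →
      (((Finset.range N).powerset).filter (fun c => i ∉ c ∧ j ∈ c)).card = 2 ^ (N - 2) := by
    intro i j hi hj hij
    have hcard : (((Finset.range N).erase i).erase j).card = N - 2 := by
      rw [Finset.card_erase_of_mem (Finset.mem_erase.2 ⟨hij.symm, Finset.mem_range.2 hj⟩),
        Finset.card_erase_of_mem (Finset.mem_range.2 hi), Finset.card_range]
      omega
    rw [← hcard, ← Finset.card_powerset]
    refine Finset.card_bij' (fun c _ => c.erase j) (fun t _ => insert j t) ?_ ?_ ?_ ?_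
    · intro c hc
      simp only [Finset.mem_filter, Finset.mem_powerset] at hc
      simp only [Finset.mem_powerset]
      intro x hx
      simp only [Finset.mem_erase] at hx ⊢
      refine ⟨hx.1, fun h => hc.2.1 (h ▸ hx.2), hc.1 hx.2⟩
    · intro t ht
      simp only [Finset.mem_powerset] at ht
      simp only [Finset.mem_filter, Finset.mem_powerset]
      refine ⟨?_, ?_, Finset.mem_insert_self _ _⟩
      · intro x hx
        rcases Finset.mem_insert.1 hx with rfl | hx
        · exact Finset.mem_range.2 hj
        · exact (Finset.mem_erase.1 (Finset.mem_erase.1 (ht hx)).2).2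
      · intro hmem
        rcases Finset.mem_insert.1 hmem with h | h
        · exact hij h
        · exact (Finset.mem_erase.1 (Finset.mem_erase.1 (ht h)).2).1 rfl
    · intro c hc
      simp only [Finset.mem_filter] at hc
      exact Finset.insert_erase hc.2.2
    · intro t ht
      simp only [Finset.mem_powerset] at ht
      apply Finset.erase_insert
      intro hjt
      exact (Finset.mem_erase.1 (ht hjt)).1 rfl
  -- double counting
  have hsum : ∑ c ∈ (Finset.range N).powerset,
      (Y'.filter (fun v => I v ∉ c ∧ J v ∈ c)).card = Y'.card * 2 ^ (N - 2) := by
    have : ∀ c : Finset ℕ, (Y'.filter (fun v => I v ∉ c ∧ J v ∈ c)).card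
        = ∑ v ∈ Y', if I v ∉ c ∧ J v ∈ c then 1 else 0 := by
      intro c; rw [Finset.card_filter]
    simp_rw [this]
    rw [Finset.sum_comm]
    have : ∀ v ∈ Y', ∑ c ∈ (Finset.range N).powerset,
        (if I v ∉ c ∧ J v ∈ c then 1 else 0) = 2 ^ (N - 2) := by
      intro v hv
      rw [← Finset.card_filter]
      exact hcount (I v) (J v) (hIN v hv) (hJN v hv) (hIJ v hv).ne
    rw [Finset.sum_congr rfl this, Finset.sum_const, smul_eq_mul]
  -- find a good coloring
  have hex2 : ∃ c ∈ (Finset.range N).powerset,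
      Y'.card ≤ 4 * (Y'.filter (fun v => I v ∉ c ∧ J v ∈ c)).card := by
    apply Finset.exists_le_of_sum_le ⟨∅, Finset.empty_mem_powerset _⟩
    apply le_of_eq
    have hpow : (2:ℕ) ^ N = 4 * 2 ^ (N - 2) := by
      have h4 : N - 2 + 2 = N := by omega
      calc (2:ℕ) ^ N = 2 ^ (N - 2 + 2) := by rw [h4]
        _ = 4 * 2 ^ (N - 2) := by ring
    calc ∑ _c ∈ (Finset.range N).powerset, Y'.card = 2 ^ N * Y'.card := by
          rw [Finset.sum_const, Finset.card_powerset, Finset.card_range, smul_eq_mul]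
      _ = 4 * (Y'.card * 2 ^ (N - 2)) := by rw [hpow]; ring
      _ = ∑ c ∈ (Finset.range N).powerset,
            4 * (Y'.filter (fun v => I v ∉ c ∧ J v ∈ c)).card := by
          rw [← Finset.mul_sum, hsum]
  obtain ⟨c, _, hc⟩ := hex2
  refine ⟨Y'.filter (fun v => I v ∉ c ∧ J v ∈ c), Finset.filter_subset _ _, ?_, ?_⟩
  · rw [div_le_iff₀ (by norm_num : (0:ℝ) < 4)]
    have hcr : (Y'.card : ℝ) ≤ 4 * ((Y'.filter (fun v => I v ∉ c ∧ J v ∈ c)).card : ℝ) := by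
      exact_mod_cast hc
    linarith
  · intro p hp q hq hpq
    simp only [Finset.mem_filter] at hp hq
    apply key p hp.1 q hq.1
    · intro h; exact hq.2.1 (h ▸ hp.2.2)
    · intro h; exact hp.2.1 (h ▸ hq.2.2)
    · intro h
      apply hpq
      rw [hrep p hp.1, hrep q hq.1]
      obtain ⟨h1, h2⟩ := Prod.mk.injEq .. ▸ h
      rw [Prod.mk.injEq] at h
      rw [h.1, h.2]
end

section
/- Let a, γ > 0, β = a/√(2(1+γ+γ²)), and Y_A = { β e_i − βγ e_j : i < j } ⊆ ℓ². Then the diameter of Y_A equals a, i.e., sup over pairs of distinct points of Y_A of their distance is a, and this supremum is attained. -/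
open RealInnerProductSpace

/-- The diameter of the configuration `Y_A = {β e_i - βγ e_j : i < j}` equals
`a = β√(2(1+γ+γ²))`: all pairwise distances are at most `a`, and the distance `a` is attained
by a pair of distinct points. -/
theorem YA_diameter_eq_a
    {H : Type*} [NormedAddCommGroup H] [InnerProductSpace ℝ H]
    (e : ℕ → H) (he : Orthonormal ℝ e)
    (a γ β : ℝ) (ha : 0 < a) (hγ : 0 < γ)
    (hβ : β = a / Real.sqrt (2 * (1 + γ + γ^2)))
    (YA : Set H)
    (hYA : YA = {v | ∃ i j : ℕ, i < j ∧ v = β • e i - (β * γ) • e j}) :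
    (∀ p ∈ YA, ∀ q ∈ YA, dist p q ≤ a) ∧
    (∃ p ∈ YA, ∃ q ∈ YA, p ≠ q ∧ dist p q = a) := by
  have hpos : (0:ℝ) < 2 * (1 + γ + γ^2) := by nlinarith
  have hβ2 : 2 * β^2 * (1 + γ + γ^2) = a^2 := by
    rw [hβ, div_pow, Real.sq_sqrt hpos.le]
    field_simp
  rw [orthonormal_iff_ite] at he
  have hinner : ∀ i j k l : ℕ,
      ⟪β • e i - (β*γ) • e j, β • e k - (β*γ) • e l⟫
        = β^2 * (if i = k then 1 else 0) - β^2*γ * (if i = l then 1 else 0)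
          - β^2*γ * (if j = k then 1 else 0) + β^2*γ^2 * (if j = l then 1 else 0) := by
    intro i j k l
    simp only [inner_sub_left, inner_sub_right, real_inner_smul_left, real_inner_smul_right,
      he]
    ring
  have hnorm : ∀ i j : ℕ, i ≠ j → ‖β • e i - (β*γ) • e j‖^2 = β^2 + β^2*γ^2 := by
    intro i j hij
    rw [← real_inner_self_eq_norm_sq, hinner]
    simp [hij, hij.symm]
    try ring
  have hd : ∀ i j k l : ℕ, i ≠ j → k ≠ l →
      dist (β • e i - (β*γ) • e j) (β • e k - (β*γ) • e l) ^ 2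
        = 2*(β^2 + β^2*γ^2)
          - 2*(β^2 * (if i = k then 1 else 0) - β^2*γ * (if i = l then 1 else 0)
          - β^2*γ * (if j = k then 1 else 0) + β^2*γ^2 * (if j = l then 1 else 0)) := by
    intro i j k l hij hkl
    rw [dist_eq_norm, norm_sub_sq_real, hnorm i j hij, hnorm k l hkl, hinner]
    ring
  constructor
  · intro p hp q hq
    rw [hYA] at hp hq
    obtain ⟨i, j, hij, rfl⟩ := hp
    obtain ⟨k, l, hkl, rfl⟩ := hq
    have hsq := hd i j k l hij.ne hkl.ne
    have h23 : (if i = l then (1:ℝ) else 0) + (if j = k then (1:ℝ) else 0) ≤ 1 := by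
      by_cases h1 : i = l <;> by_cases h2 : j = k <;> simp [h1, h2] <;> omega
    have h1n : (0:ℝ) ≤ (if i = k then (1:ℝ) else 0) := by positivity
    have h4n : (0:ℝ) ≤ (if j = l then (1:ℝ) else 0) := by positivity
    have hb2 : (0:ℝ) ≤ β^2 := sq_nonneg β
    have hle : dist (β • e i - (β*γ) • e j) (β • e k - (β*γ) • e l) ^ 2 ≤ a^2 := by
      rw [hsq, ← hβ2]
      nlinarith [mul_nonneg (mul_nonneg hb2 hγ.le)
          (sub_nonneg.2 h23), mul_nonneg hb2 h1n,
        mul_nonneg (mul_nonneg hb2 (sq_nonneg γ)) h4n]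
    nlinarith [dist_nonneg (x := β • e i - (β*γ) • e j) (y := β • e k - (β*γ) • e l)]
  · refine ⟨β • e 0 - (β*γ) • e 1, ?_, β • e 1 - (β*γ) • e 2, ?_, ?_, ?_⟩
    · rw [hYA]; exact ⟨0, 1, by norm_num, rfl⟩
    · rw [hYA]; exact ⟨1, 2, by norm_num, rfl⟩
    all_goals {
      have hsq := hd 0 1 1 2 (by norm_num) (by norm_num)
      simp only [show (0:ℕ) ≠ 1 by norm_num, show (0:ℕ) ≠ 2 by norm_num,
        show (1:ℕ) ≠ 2 by norm_num, if_false, if_true, if_neg, reduceIte] at hsq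
      have hsq' : dist (β • e 0 - (β*γ) • e 1) (β • e 1 - (β*γ) • e 2) ^ 2 = a^2 := by
        rw [hsq, ← hβ2]; ring
      have hdnn : (0:ℝ) ≤ dist (β • e 0 - (β*γ) • e 1) (β • e 1 - (β*γ) • e 2) :=
        dist_nonneg
      have heq : dist (β • e 0 - (β*γ) • e 1) (β • e 1 - (β*γ) • e 2) = a := by
        calc dist (β • e 0 - (β*γ) • e 1) (β • e 1 - (β*γ) • e 2)
            = Real.sqrt (dist (β • e 0 - (β*γ) • e 1) (β • e 1 - (β*γ) • e 2) ^ 2) :=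
              (Real.sqrt_sq hdnn).symm
          _ = a := by rw [hsq', Real.sqrt_sq ha.le]
      first
        | (exact dist_pos.mp (by rw [heq]; exact ha))
        | exact heq
    }
end
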